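/- arXiv:1508.01922 — 9 statements merged into one kernel-verified Lean document; each statement's English description precedes it below -/
import Mathlib

section
/- Let X ∈ ℝ^{n×p} have orthonormal columns (xⱼᵀx_k = 1 if j = k and 0 otherwise), let y ∈ ℝⁿ, set cⱼ = xⱼᵀy for j = 1,…,p, suppose |c₁| ≥ |c₂| ≥ … ≥ |c_p| with |c_k| > |c_{k+1}|, and let δ satisfy |c_{k+1}| ≤ δ < |c_k|. Then the set of all solutions to the Discrete Dantzig Selector problem with parameter δ equals { (c₁+u₁,…,c_k+u_k, 0,…,0) : |uⱼ| ≤ δ for j = 1,…,k }. -/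
noncomputable section
open Classical

/-- The ℓ₀ "norm": number of nonzero entries. -/
def l0 {p : ℕ} (β : Fin p → ℝ) : ℕ := (Finset.univ.filter fun i => β i ≠ 0).card

/-- Feasibility for the Dantzig-type constraint: `‖Xᵀ(y − Xβ)‖∞ ≤ δ`. -/
def Feas {n p : ℕ} (X : Matrix (Fin n) (Fin p) ℝ) (y : Fin n → ℝ) (δ : ℝ)
    (β : Fin p → ℝ) : Prop :=
  ∀ j, |X.transpose.mulVec (y - X.mulVec β) j| ≤ δ

/-- For a design with orthonormal columns and `|c₁| ≥ … ≥ |c_p|`,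
`|c_k| > |c_{k+1}|` and `|c_{k+1}| ≤ δ < |c_k|` (`0`-indexed: `c_k = c ⟨k-1⟩`,
`c_{k+1} = c ⟨k⟩`), the set of all solutions of the Discrete Dantzig Selector problem
with parameter `δ` equals `{(c₁+u₁,…,c_k+u_k,0,…,0) : |uⱼ| ≤ δ}`. -/
theorem stmt1 {n p : ℕ} (X : Matrix (Fin n) (Fin p) ℝ)
    (horth : X.transpose * X = 1)
    (y : Fin n → ℝ) (c : Fin p → ℝ) (hc : ∀ j, c j = ∑ i, X i j * y i)
    (hord : ∀ i j : Fin p, i ≤ j → |c j| ≤ |c i|)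
    (k : ℕ) (hk1 : 1 ≤ k) (hkp : k < p)
    (hstrict : |c ⟨k, hkp⟩| < |c ⟨k - 1, by omega⟩|)
    (δ : ℝ) (hδlow : |c ⟨k, hkp⟩| ≤ δ) (hδhigh : δ < |c ⟨k - 1, by omega⟩|) :
    {β : Fin p → ℝ | Feas X y δ β ∧ ∀ β' : Fin p → ℝ, Feas X y δ β' → l0 β ≤ l0 β'} =
    {β : Fin p → ℝ | (∀ j : Fin p, (j : ℕ) < k → |β j - c j| ≤ δ) ∧
      (∀ j : Fin p, k ≤ (j : ℕ) → β j = 0)} := by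

  have hδ0 : 0 ≤ δ := le_trans (abs_nonneg _) hδlow
  have hfeas : ∀ β, Feas X y δ β ↔ ∀ j, |c j - β j| ≤ δ := by
    intro β
    unfold Feas
    have h1 : ∀ j, X.transpose.mulVec (y - X.mulVec β) j = c j - β j := by
      intro j
      rw [Matrix.mulVec_sub]
      have h2 : X.transpose.mulVec (X.mulVec β) = β := by
        rw [Matrix.mulVec_mulVec, horth, Matrix.one_mulVec]
      have h3 : X.transpose.mulVec y j = c j := by
        simp [Matrix.mulVec, dotProduct, hc, Matrix.transpose_apply]
      simp [h2, h3]
    simp only [h1]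
  have hbig : ∀ j : Fin p, (j : ℕ) < k → δ < |c j| := by
    intro j hj
    exact lt_of_lt_of_le hδhigh (hord j ⟨k-1, by omega⟩ (by simp [Fin.le_def]; omega))
  have hsmall : ∀ j : Fin p, k ≤ (j : ℕ) → |c j| ≤ δ := by
    intro j hj
    exact le_trans (hord ⟨k, hkp⟩ j (by simp [Fin.le_def]; omega)) hδlow
  have hne : ∀ β, Feas X y δ β → ∀ j : Fin p, (j : ℕ) < k → β j ≠ 0 := by
    intro β hβ j hj h0
    have := (hfeas β).1 hβ j
    rw [h0, sub_zero] at this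
    exact absurd this (not_le.2 (hbig j hj))
  have hcardk : (Finset.univ.filter fun i : Fin p => (i:ℕ) < k).card = k := by
    have himg : Finset.image (fun i : Fin k => (⟨(i:ℕ), i.2.trans hkp⟩ : Fin p)) Finset.univ
        = Finset.univ.filter fun i : Fin p => (i:ℕ) < k := by
      ext x
      simp only [Finset.mem_image, Finset.mem_univ, true_and, Finset.mem_filter, Fin.ext_iff]
      constructor
      · rintro ⟨a, ha⟩; rw [← ha]; exact a.2
      · intro hx; exact ⟨⟨(x:ℕ), hx⟩, rfl⟩
    calc (Finset.univ.filter fun i : Fin p => (i:ℕ) < k).card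
        = (Finset.image (fun i : Fin k => (⟨(i:ℕ), i.2.trans hkp⟩ : Fin p)) Finset.univ).card := by rw [himg]
      _ = k := by
          rw [Finset.card_image_of_injective _ (fun a b hab => by
            simpa [Fin.ext_iff] using hab)]
          simp
  have hl0ge : ∀ β, Feas X y δ β → k ≤ l0 β := by
    intro β hβ
    have hsub : (Finset.univ.filter fun i : Fin p => (i:ℕ) < k) ⊆
        Finset.univ.filter fun i => β i ≠ 0 := by
      intro i hi
      simp only [Finset.mem_filter, Finset.mem_univ, true_and] at hi ⊢
      exact hne β hβ i hi
    rw [← hcardk]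
    exact Finset.card_le_card hsub
  -- the reference point
  set β₀ : Fin p → ℝ := fun j => if (j:ℕ) < k then c j else 0 with hβ₀
  have hβ₀feas : Feas X y δ β₀ := by
    rw [hfeas]
    intro j
    by_cases h : (j:ℕ) < k
    · simp [hβ₀, h, hδ0]
    · simpa [hβ₀, h] using hsmall j (not_lt.1 h)
  have hβ₀l0 : l0 β₀ ≤ k := by
    rw [← hcardk]
    apply Finset.card_le_card
    intro i hi
    simp only [Finset.mem_filter, Finset.mem_univ, true_and] at hi ⊢
    by_contra h
    exact hi (by simp [hβ₀, h])
  ext β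
  simp only [Set.mem_setOf_eq]
  constructor
  · rintro ⟨hβfeas, hopt⟩
    have hle : l0 β ≤ k := le_trans (hopt β₀ hβ₀feas) hβ₀l0
    have hzero : ∀ j : Fin p, k ≤ (j : ℕ) → β j = 0 := by
      intro j hj
      by_contra h0
      have hsub : insert j (Finset.univ.filter fun i : Fin p => (i:ℕ) < k) ⊆
          Finset.univ.filter fun i => β i ≠ 0 := by
        intro i hi
        rcases Finset.mem_insert.1 hi with rfl | hi
        · simp [h0]
        · simp only [Finset.mem_filter, Finset.mem_univ, true_and] at hi ⊢
          exact hne β hβfeas i hi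
      have hcard : k + 1 ≤ l0 β := by
        have hnot : j ∉ (Finset.univ.filter fun i : Fin p => (i:ℕ) < k) := by
          simp; omega
        calc k + 1 = (insert j (Finset.univ.filter fun i : Fin p => (i:ℕ) < k)).card := by
              rw [Finset.card_insert_of_notMem hnot, hcardk]
          _ ≤ l0 β := Finset.card_le_card hsub
      omega
    refine ⟨fun j hj => ?_, hzero⟩
    rw [abs_sub_comm]
    exact (hfeas β).1 hβfeas j
  · rintro ⟨h1, h2⟩
    have hβfeas : Feas X y δ β := by
      rw [hfeas]
      intro j
      by_cases h : (j:ℕ) < k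
      · rw [abs_sub_comm]; exact h1 j h
      · rw [h2 j (not_lt.1 h), sub_zero]; exact hsmall j (not_lt.1 h)
    refine ⟨hβfeas, fun β' hβ' => ?_⟩
    have : l0 β ≤ k := by
      rw [← hcardk]
      apply Finset.card_le_card
      intro i hi
      simp only [Finset.mem_filter, Finset.mem_univ, true_and] at hi ⊢
      by_contra h
      exact hi (h2 i (not_lt.1 h))
    exact le_trans this (hl0ge β' hβ')
end
end

section
/- Let X ∈ ℝ^{n×p}, let k be a positive integer with 2k ≤ p, and let c₀ ≥ 1. Then γ(2k) ≥ κ(k, c₀)/√2. -/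
noncomputable section
open Classical

/-- Euclidean norm of a vector. -/
def l2 {q : ℕ} (v : Fin q → ℝ) : ℝ := Real.sqrt (∑ i, (v i) ^ 2)

/-- ℓ₁-norm of the sub-vector of `θ` with coordinates in `J`. -/
def l1S {p : ℕ} (J : Finset (Fin p)) (θ : Fin p → ℝ) : ℝ := ∑ i ∈ J, |θ i|

/-- Euclidean norm of the sub-vector of `θ` with coordinates in `J`. -/
def l2S {p : ℕ} (J : Finset (Fin p)) (θ : Fin p → ℝ) : ℝ := Real.sqrt (∑ i ∈ J, (θ i) ^ 2)

/-- `γ(k) = min{ ‖Xθ‖₂/‖θ‖₂ : θ ≠ 0, ‖θ‖₀ ≤ k }`. -/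
def gammaX {n p : ℕ} (X : Matrix (Fin n) (Fin p) ℝ) (k : ℕ) : ℝ :=
  sInf {r : ℝ | ∃ θ : Fin p → ℝ, θ ≠ 0 ∧ l0 θ ≤ k ∧ r = l2 (X.mulVec θ) / l2 θ}

/-- `κ(k, c₀) = min over |J₀| ≤ k of min{ ‖Xθ‖₂/‖θ_{J₀}‖₂ : θ ≠ 0, ‖θ_{J₀ᶜ}‖₁ ≤ c₀‖θ_{J₀}‖₁ }`. -/
def kappaX {n p : ℕ} (X : Matrix (Fin n) (Fin p) ℝ) (k : ℕ) (c0 : ℝ) : ℝ :=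
  sInf {r : ℝ | ∃ (J0 : Finset (Fin p)) (θ : Fin p → ℝ), J0.card ≤ k ∧ θ ≠ 0 ∧
    l1S J0ᶜ θ ≤ c0 * l1S J0 θ ∧ r = l2 (X.mulVec θ) / l2S J0 θ}

/-- Top-k selection: a subset of `S` of size `min k S.card` on which `f` dominates the rest. -/
lemma topk {p : ℕ} (f : Fin p → ℝ) :
    ∀ (k : ℕ) (S : Finset (Fin p)), ∃ J, J ⊆ S ∧ J.card = min k S.card ∧
      ∀ i ∈ J, ∀ j ∈ S \ J, f j ≤ f i := by
  intro k
  induction k with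
  | zero => intro S; exact ⟨∅, Finset.empty_subset _, by simp, by simp⟩
  | succ k ih =>
    intro S
    by_cases hS : S.Nonempty
    · obtain ⟨i₀, hi₀, hmax⟩ := S.exists_max_image f hS
      obtain ⟨J', hsub, hcard, hprop⟩ := ih (S.erase i₀)
      have hi₀J' : i₀ ∉ J' := fun h => (Finset.mem_erase.mp (hsub h)).1 rfl
      refine ⟨insert i₀ J', ?_, ?_, ?_⟩
      · intro x hx
        rcases Finset.mem_insert.mp hx with h | h
        · exact h ▸ hi₀
        · exact Finset.mem_of_mem_erase (hsub h)
      · rw [Finset.card_insert_of_notMem hi₀J', hcard, Finset.card_erase_of_mem hi₀]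
        have : 1 ≤ S.card := Finset.card_pos.mpr hS
        omega
      · intro i hi j hj
        have hjS : j ∈ S := (Finset.mem_sdiff.mp hj).1
        have hjn : j ∉ insert i₀ J' := (Finset.mem_sdiff.mp hj).2
        rcases Finset.mem_insert.mp hi with h | h
        · exact h ▸ hmax j hjS
        · refine hprop i h j ?_
          rw [Finset.mem_sdiff, Finset.mem_erase]
          exact ⟨⟨fun e => hjn (e ▸ Finset.mem_insert_self _ _), hjS⟩,
            fun e => hjn (Finset.mem_insert_of_mem e)⟩
    · have : S = ∅ := Finset.not_nonempty_iff_eq_empty.mp hS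
      subst this
      exact ⟨∅, Finset.empty_subset _, by simp, by simp⟩

lemma sum_le_sum_of_card_le {p : ℕ} (f : Fin p → ℝ) (hf : ∀ i, 0 ≤ f i)
    (A B : Finset (Fin p)) (hA : A.Nonempty) (hcard : B.card ≤ A.card)
    (h : ∀ j ∈ B, ∀ i ∈ A, f j ≤ f i) : ∑ j ∈ B, f j ≤ ∑ i ∈ A, f i := by
  obtain ⟨i₀, hi₀, hmin⟩ := A.exists_min_image f hA
  calc ∑ j ∈ B, f j ≤ ∑ _j ∈ B, f i₀ := Finset.sum_le_sum (fun j hj => h j hj i₀ hi₀)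
    _ = B.card * f i₀ := by rw [Finset.sum_const, nsmul_eq_mul]
    _ ≤ A.card * f i₀ := by
        apply mul_le_mul_of_nonneg_right _ (hf i₀)
        exact_mod_cast hcard
    _ = ∑ _i ∈ A, f i₀ := by rw [Finset.sum_const, nsmul_eq_mul]
    _ ≤ ∑ i ∈ A, f i := Finset.sum_le_sum (fun i hi => hmin i hi)

/-- For `k ≥ 1` with `2k ≤ p` and `c₀ ≥ 1`: `γ(2k) ≥ κ(k, c₀)/√2`. -/
theorem stmt2 {n p : ℕ} (X : Matrix (Fin n) (Fin p) ℝ)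
    (k : ℕ) (hk : 0 < k) (h2k : 2 * k ≤ p) (c0 : ℝ) (hc0 : 1 ≤ c0) :
    kappaX X k c0 / Real.sqrt 2 ≤ gammaX X (2 * k) := by
  have hs2 : (0:ℝ) < Real.sqrt 2 := Real.sqrt_pos.mpr (by norm_num)
  -- the γ set is nonempty
  have hpne : 0 < p := by omega
  have hne : {r : ℝ | ∃ θ : Fin p → ℝ, θ ≠ 0 ∧ l0 θ ≤ 2 * k ∧
      r = l2 (X.mulVec θ) / l2 θ}.Nonempty := by
    set i : Fin p := ⟨0, hpne⟩
    refine ⟨_, fun j => if j = i then (1:ℝ) else 0, ?_, ?_, rfl⟩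
    · intro h
      have := congrFun h i
      simp at this
    · unfold l0
      calc (Finset.univ.filter fun j => (if j = i then (1:ℝ) else 0) ≠ 0).card
          ≤ ({i} : Finset (Fin p)).card := by
            apply Finset.card_le_card
            intro j hj
            simp only [Finset.mem_filter] at hj
            simp only [Finset.mem_singleton]
            by_contra hne
            exact hj.2 (by simp [hne])
        _ ≤ 2 * k := by simp; omega
  rw [gammaX]
  apply le_csInf hne
  rintro r ⟨θ, hθ, hl0, rfl⟩
  -- support of θ
  set S : Finset (Fin p) := Finset.univ.filter fun i => θ i ≠ 0 with hSdef
  have hScard : S.card ≤ 2 * k := hl0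
  have hSmem : ∀ i, i ∈ S ↔ θ i ≠ 0 := by intro i; simp [hSdef]
  have hSne : S.Nonempty := by
    obtain ⟨i, hi⟩ := Function.ne_iff.mp hθ
    exact ⟨i, (hSmem i).mpr hi⟩
  obtain ⟨J, hJS, hJcard, hJtop⟩ := topk (fun i => |θ i|) k S
  have hJk : J.card ≤ k := hJcard ▸ min_le_left _ _
  have hJne : J.Nonempty := by
    rw [← Finset.card_pos, hJcard]
    have := Finset.card_pos.mpr hSne
    omega
  have hSJcard : (S \ J).card ≤ J.card := by
    rw [Finset.card_sdiff_of_subset hJS, hJcard]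
    omega
  -- sums over Jᶜ reduce to sums over S \ J
  have hreduce : ∀ g : Fin p → ℝ, (∀ i, θ i = 0 → g i = 0) →
      ∑ i ∈ Jᶜ, g i = ∑ i ∈ S \ J, g i := by
    intro g hg
    apply (Finset.sum_subset ?_ ?_).symm
    · intro i hi
      rw [Finset.mem_compl]
      exact fun h => (Finset.mem_sdiff.mp hi).2 h
    · intro i hi hni
      apply hg
      by_contra h
      exact hni (Finset.mem_sdiff.mpr ⟨(hSmem i).mpr h, Finset.mem_compl.mp hi⟩)
  -- ℓ₁ condition
  have hl1 : l1S Jᶜ θ ≤ c0 * l1S J θ := by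
    have h1 : l1S Jᶜ θ = ∑ i ∈ S \ J, |θ i| :=
      hreduce (fun i => |θ i|) (fun i h => by simp [h])
    have h2 : ∑ i ∈ S \ J, |θ i| ≤ ∑ i ∈ J, |θ i| :=
      sum_le_sum_of_card_le _ (fun i => abs_nonneg _) J (S \ J) hJne hSJcard
        (fun j hj i hi => hJtop i hi j hj)
    have h3 : (0:ℝ) ≤ ∑ i ∈ J, |θ i| := Finset.sum_nonneg fun i _ => abs_nonneg _
    calc l1S Jᶜ θ ≤ ∑ i ∈ J, |θ i| := h1 ▸ h2
      _ = 1 * l1S J θ := by rw [one_mul]; rfl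
      _ ≤ c0 * l1S J θ := mul_le_mul_of_nonneg_right hc0 h3
  -- ℓ₂: total squared sum ≤ 2 * sum over J
  have hsq : ∑ i, (θ i) ^ 2 ≤ 2 * ∑ i ∈ J, (θ i) ^ 2 := by
    have hsplit : ∑ i ∈ J, (θ i) ^ 2 + ∑ i ∈ Jᶜ, (θ i) ^ 2 = ∑ i, (θ i) ^ 2 :=
      Finset.sum_add_sum_compl J _
    have h1 : ∑ i ∈ Jᶜ, (θ i) ^ 2 = ∑ i ∈ S \ J, (θ i) ^ 2 :=
      hreduce (fun i => (θ i) ^ 2) (fun i h => by simp [h])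
    have h2 : ∑ i ∈ S \ J, (θ i) ^ 2 ≤ ∑ i ∈ J, (θ i) ^ 2 := by
      apply sum_le_sum_of_card_le _ (fun i => sq_nonneg _) J (S \ J) hJne hSJcard
      intro j hj i hi
      have := hJtop i hi j hj
      calc (θ j) ^ 2 = |θ j| ^ 2 := (sq_abs _).symm
        _ ≤ |θ i| ^ 2 := pow_le_pow_left₀ (abs_nonneg _) this 2
        _ = (θ i) ^ 2 := sq_abs _
    linarith
  -- positivity
  have hJpos : 0 < ∑ i ∈ J, (θ i) ^ 2 := by
    obtain ⟨i, hi⟩ := hJne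
    have hiθ : θ i ≠ 0 := (hSmem i).mp (hJS hi)
    exact Finset.sum_pos' (fun j _ => sq_nonneg _)
      ⟨i, hi, by positivity⟩
  have hb : 0 < l2S J θ := Real.sqrt_pos.mpr hJpos
  have hc : 0 < l2 θ := by
    apply Real.sqrt_pos.mpr
    obtain ⟨i, hi⟩ := hJne
    have hiθ : θ i ≠ 0 := (hSmem i).mp (hJS hi)
    exact Finset.sum_pos' (fun j _ => sq_nonneg _)
      ⟨i, Finset.mem_univ i, by positivity⟩
  have hcb : l2 θ ≤ Real.sqrt 2 * l2S J θ := by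
    rw [l2, l2S, ← Real.sqrt_mul (by norm_num : (0:ℝ) ≤ 2)]
    exact Real.sqrt_le_sqrt hsq
  set A := l2 (X.mulVec θ) with hA
  have hA0 : 0 ≤ A := Real.sqrt_nonneg _
  -- the candidate value in the κ set
  have hmem : A / l2S J θ ∈ {r : ℝ | ∃ (J0 : Finset (Fin p)) (θ' : Fin p → ℝ),
      J0.card ≤ k ∧ θ' ≠ 0 ∧ l1S J0ᶜ θ' ≤ c0 * l1S J0 θ' ∧
      r = l2 (X.mulVec θ') / l2S J0 θ'} := ⟨J, θ, hJk, hθ, hl1, rfl⟩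
  have hbdd : BddBelow {r : ℝ | ∃ (J0 : Finset (Fin p)) (θ' : Fin p → ℝ),
      J0.card ≤ k ∧ θ' ≠ 0 ∧ l1S J0ᶜ θ' ≤ c0 * l1S J0 θ' ∧
      r = l2 (X.mulVec θ') / l2S J0 θ'} := by
    refine ⟨0, ?_⟩
    rintro x ⟨J0, θ', _, _, _, rfl⟩
    exact div_nonneg (Real.sqrt_nonneg _) (Real.sqrt_nonneg _)
  have hκ : kappaX X k c0 ≤ A / l2S J θ := csInf_le hbdd hmem
  -- finish: A / l2S J θ ≤ √2 * (A / l2 θ)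
  have hfin : A / l2S J θ ≤ Real.sqrt 2 * (A / l2 θ) := by
    rw [mul_div_assoc', div_le_div_iff₀ hb hc]
    calc A * l2 θ ≤ A * (Real.sqrt 2 * l2S J θ) :=
          mul_le_mul_of_nonneg_left hcb hA0
      _ = Real.sqrt 2 * A * l2S J θ := by ring
  rw [div_le_iff₀ hs2] at *
  calc kappaX X k c0 ≤ A / l2S J θ := hκ
    _ ≤ Real.sqrt 2 * (A / l2 θ) := hfin
    _ = A / l2 θ * Real.sqrt 2 := by ring
end
end

section
/- Let X ∈ ℝ^{n×p}, let k and m be positive integers with k ≤ m ≤ p − k, and let c₀ ≥ 1. Then γ(2k) ≥ κ(k, c₀, m). -/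
noncomputable section
open Classical

/-- `κ(k, c₀, m)`: the minimum over index sets `J₀` with `|J₀| ≤ k` and over
`θ ≠ 0` satisfying `‖θ_{J₀ᶜ}‖₁ ≤ c₀‖θ_{J₀}‖₁` of `‖Xθ‖₂/‖θ_{J₀₁}‖₂`, where
`J₀₁ = J₀ ∪ J₁` and `J₁` consists of the `m` largest-in-magnitude coordinates of `θ`
outside `J₀`. -/
def kappaXm {n p : ℕ} (X : Matrix (Fin n) (Fin p) ℝ) (k : ℕ) (c0 : ℝ) (m : ℕ) : ℝ :=
  sInf {r : ℝ | ∃ (J0 J1 : Finset (Fin p)) (θ : Fin p → ℝ), J0.card ≤ k ∧ θ ≠ 0 ∧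
    l1S J0ᶜ θ ≤ c0 * l1S J0 θ ∧
    J1 ⊆ J0ᶜ ∧ J1.card = m ∧ (∀ i ∈ J1, ∀ j ∈ J0ᶜ \ J1, |θ j| ≤ |θ i|) ∧
    r = l2 (X.mulVec θ) / l2S (J0 ∪ J1) θ}

lemma exists_topk {p : ℕ} (f : Fin p → ℝ) :
    ∀ k, k ≤ p → ∃ s : Finset (Fin p), s.card = k ∧ ∀ i ∈ s, ∀ j ∉ s, f j ≤ f i := by
  intro k
  induction k with
  | zero => intro _; exact ⟨∅, rfl, by simp⟩
  | succ k ih =>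
    intro hk
    obtain ⟨s, hcard, hs⟩ := ih (Nat.le_of_succ_le hk)
    have hne : sᶜ.Nonempty := by
      rw [← Finset.card_pos, Finset.card_compl, Fintype.card_fin, hcard]; omega
    obtain ⟨b, hb, hmax⟩ := Finset.exists_max_image sᶜ f hne
    have hbs : b ∉ s := Finset.mem_compl.mp hb
    refine ⟨insert b s, by rw [Finset.card_insert_of_notMem hbs, hcard], ?_⟩
    intro i hi j hj
    rcases Finset.mem_insert.mp hi with rfl | hi
    · exact hmax j (Finset.mem_compl.mpr fun h => hj (Finset.mem_insert_of_mem h))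
    · exact hs i hi j (fun h => hj (Finset.mem_insert_of_mem h))

/-- For `1 ≤ k ≤ m ≤ p − k` and `c₀ ≥ 1`: `γ(2k) ≥ κ(k, c₀, m)`. -/
theorem stmt3 {n p : ℕ} (X : Matrix (Fin n) (Fin p) ℝ)
    (k m : ℕ) (hk : 0 < k) (hkm : k ≤ m) (hmp : m ≤ p - k) (c0 : ℝ) (hc0 : 1 ≤ c0) :
    kappaXm X k c0 m ≤ gammaX X (2 * k) := by
  have hpk : k + m ≤ p := by omega
  have hp : 0 < p := by omega
  -- the gamma set is nonempty
  have hne : {r : ℝ | ∃ θ : Fin p → ℝ, θ ≠ 0 ∧ l0 θ ≤ 2 * k ∧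
      r = l2 (X.mulVec θ) / l2 θ}.Nonempty := by
    classical
    set i0 : Fin p := ⟨0, hp⟩
    refine ⟨_, fun i => if i = i0 then (1:ℝ) else 0, ?_, ?_, rfl⟩
    · intro h
      have := congrFun h i0
      simp at this
    · have : (Finset.univ.filter fun i => (if i = i0 then (1:ℝ) else 0) ≠ 0) = {i0} := by
        ext i
        by_cases h : i = i0 <;> simp [h]
      rw [l0, this]
      simp; omega
  apply le_csInf hne
  rintro r ⟨θ, hθ, hl0, rfl⟩
  -- choose J0 = top-k coordinates of |θ|
  obtain ⟨J0, hJ0card, hJ0top⟩ := exists_topk (fun i => |θ i|) k (by omega)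
  set supp : Finset (Fin p) := Finset.univ.filter fun i => θ i ≠ 0 with hsupp
  set T : Finset (Fin p) := supp \ J0 with hT
  have hTzero : ∀ j, j ∉ J0 → j ∉ T → θ j = 0 := by
    intro j hj hjT
    by_contra h
    exact hjT (Finset.mem_sdiff.mpr ⟨Finset.mem_filter.mpr ⟨Finset.mem_univ _, h⟩, hj⟩)
  have hTcard : T.card ≤ k := by
    rcases T.eq_empty_or_nonempty with h | ⟨j, hj⟩
    · simp [h]
    · have hjs := Finset.mem_sdiff.mp hj
      have hjne : θ j ≠ 0 := (Finset.mem_filter.mp hjs.1).2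
      have hJ0supp : J0 ⊆ supp := by
        intro i hi
        refine Finset.mem_filter.mpr ⟨Finset.mem_univ _, fun h0 => ?_⟩
        have := hJ0top i hi j hjs.2
        rw [h0] at this
        simp at this
        exact hjne this
      have : T.card = supp.card - J0.card := Finset.card_sdiff_of_subset hJ0supp
      have hsc : supp.card ≤ 2 * k := hl0
      omega
  -- cone condition
  have hmin := Finset.exists_min_image J0 (fun i => |θ i|)
    (Finset.card_pos.mp (by omega))
  obtain ⟨b, hb, hbmin⟩ := hmin
  have hcone : l1S J0ᶜ θ ≤ c0 * l1S J0 θ := by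
    have h1 : l1S J0ᶜ θ = ∑ j ∈ T, |θ j| := by
      rw [l1S]
      refine (Finset.sum_subset ?_ ?_).symm
      · intro j hj; exact Finset.mem_compl.mpr (Finset.mem_sdiff.mp hj).2
      · intro j hj hjT
        rw [hTzero j (Finset.mem_compl.mp hj) hjT, abs_zero]
    have h2 : ∑ j ∈ T, |θ j| ≤ T.card • |θ b| := by
      apply Finset.sum_le_card_nsmul
      intro j hj
      exact hJ0top b hb j (Finset.mem_sdiff.mp hj).2
    have h3 : J0.card • |θ b| ≤ ∑ i ∈ J0, |θ i| := by
      apply Finset.card_nsmul_le_sum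
      intro i hi; exact hbmin i hi
    have h4 : (T.card : ℝ) * |θ b| ≤ (J0.card : ℝ) * |θ b| := by
      apply mul_le_mul_of_nonneg_right _ (abs_nonneg _)
      exact_mod_cast hTcard.trans hJ0card.ge
    have h5 : l1S J0ᶜ θ ≤ l1S J0 θ := by
      rw [h1, l1S]
      calc ∑ j ∈ T, |θ j| ≤ (T.card : ℝ) * |θ b| := by
            simpa [nsmul_eq_mul] using h2
        _ ≤ (J0.card : ℝ) * |θ b| := h4
        _ ≤ ∑ i ∈ J0, |θ i| := by simpa [nsmul_eq_mul] using h3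
    have hnn : 0 ≤ l1S J0 θ := Finset.sum_nonneg fun i _ => abs_nonneg _
    nlinarith
  -- extend T to J1 of size m inside J0ᶜ
  have hTsub : T ⊆ J0ᶜ := fun j hj => Finset.mem_compl.mpr (Finset.mem_sdiff.mp hj).2
  obtain ⟨J1, hTJ1, hJ1sub, hJ1card⟩ := Finset.exists_subsuperset_card_eq hTsub
    (hTcard.trans hkm)
    (by rw [Finset.card_compl, Fintype.card_fin, hJ0card]; omega)
  have hzero : ∀ j, j ∉ J0 ∪ J1 → θ j = 0 := by
    intro j hj
    rw [Finset.mem_union] at hj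
    push_neg at hj
    exact hTzero j hj.1 (fun h => hj.2 (hTJ1 h))
  have horder : ∀ i ∈ J1, ∀ j ∈ J0ᶜ \ J1, |θ j| ≤ |θ i| := by
    intro i _ j hj
    have hj' := Finset.mem_sdiff.mp hj
    have : θ j = 0 := hzero j (by
      rw [Finset.mem_union]; push_neg
      exact ⟨Finset.mem_compl.mp hj'.1, hj'.2⟩)
    rw [this, abs_zero]
    exact abs_nonneg _
  have hl2eq : l2S (J0 ∪ J1) θ = l2 θ := by
    rw [l2S, l2]
    congr 1
    apply Finset.sum_subset (Finset.subset_univ _)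
    intro j _ hj
    rw [hzero j hj]; ring
  apply csInf_le
  · refine ⟨0, ?_⟩
    rintro r ⟨J0', J1', θ', _, _, _, _, _, _, rfl⟩
    exact div_nonneg (Real.sqrt_nonneg _) (Real.sqrt_nonneg _)
  · exact ⟨J0, J1, θ, hJ0card.le, hθ, hcone, hJ1sub, hJ1card, horder, by rw [hl2eq]⟩
end
end

section
/- Let X ∈ ℝ^{n×p} with p ≥ 2 have columns of unit ℓ₂-norm, let ε ∈ ℝⁿ have i.i.d. N(0, σ²) entries with σ > 0, let a ≥ 0, and set δ = σ√(2(1+a)·log p). Then P( ‖Xᵀε‖∞ ≤ δ ) ≥ 1 − ( pᵃ √(π log p) )⁻¹. -/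
open MeasureTheory ProbabilityTheory Real NNReal Filter

lemma pdf_mul (v₁ v₂ : ℝ≥0) (h₁ : v₁ ≠ 0) (h₂ : v₂ ≠ 0) (z x : ℝ) :
    gaussianPDFReal 0 v₁ x * gaussianPDFReal 0 v₂ (z - x) =
      gaussianPDFReal 0 (v₁ + v₂) z *
        gaussianPDFReal ((v₁ : ℝ) * z / (v₁ + v₂)) (v₁ * v₂ / (v₁ + v₂)) x := by
  have hv₁ : (0:ℝ) < v₁ := lt_of_le_of_ne v₁.coe_nonneg (by exact_mod_cast (Ne.symm h₁))
  have hv₂ : (0:ℝ) < v₂ := lt_of_le_of_ne v₂.coe_nonneg (by exact_mod_cast (Ne.symm h₂))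
  have hs : (0:ℝ) < (v₁:ℝ) + v₂ := by positivity
  simp only [gaussianPDFReal, sub_zero]
  push_cast
  rw [mul_mul_mul_comm, ← Real.exp_add, mul_mul_mul_comm, ← Real.exp_add]
  congr 1
  · rw [← mul_inv, ← mul_inv, ← Real.sqrt_mul (by positivity), ← Real.sqrt_mul (by positivity)]
    congr 2
    field_simp
  · congr 1
    field_simp
    ring

lemma conv_pdf (v₁ v₂ : ℝ≥0) (h₁ : v₁ ≠ 0) (h₂ : v₂ ≠ 0) (z : ℝ) :
    ∫⁻ x, gaussianPDF 0 v₁ x * gaussianPDF 0 v₂ (z - x) = gaussianPDF 0 (v₁ + v₂) z := by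
  have hnz : v₁ * v₂ / (v₁ + v₂) ≠ 0 := by
    simp only [ne_eq, div_eq_zero_iff, mul_eq_zero, add_eq_zero]
    push_neg
    exact ⟨⟨h₁, h₂⟩, fun h => absurd h h₁⟩
  simp only [gaussianPDF]
  have key : ∀ x : ℝ, gaussianPDFReal 0 v₁ x * gaussianPDFReal 0 v₂ (z - x) =
      gaussianPDFReal 0 (v₁ + v₂) z *
        gaussianPDFReal ((v₁ : ℝ) * z / (v₁ + v₂)) (v₁ * v₂ / (v₁ + v₂)) x :=
    fun x => pdf_mul v₁ v₂ h₁ h₂ z x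
  calc ∫⁻ x, ENNReal.ofReal (gaussianPDFReal 0 v₁ x) * ENNReal.ofReal (gaussianPDFReal 0 v₂ (z - x))
      = ∫⁻ x, ENNReal.ofReal (gaussianPDFReal 0 v₁ x * gaussianPDFReal 0 v₂ (z - x)) := by
        simp_rw [ENNReal.ofReal_mul (gaussianPDFReal_nonneg _ _ _)]
    _ = ENNReal.ofReal (∫ x, gaussianPDFReal 0 v₁ x * gaussianPDFReal 0 v₂ (z - x)) := by
        rw [← ofReal_integral_eq_lintegral_ofReal]
        · simp_rw [key]
          exact (integrable_gaussianPDFReal _ _).const_mul _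
        · exact ae_of_all _ fun x =>
            mul_nonneg (gaussianPDFReal_nonneg _ _ _) (gaussianPDFReal_nonneg _ _ _)
    _ = ENNReal.ofReal (gaussianPDFReal 0 (v₁ + v₂) z) := by
        simp_rw [key, integral_const_mul, integral_gaussianPDFReal_eq_one _ hnz, mul_one]

lemma gaussianReal_conv (v₁ v₂ : ℝ≥0) :
    (gaussianReal 0 v₁).conv (gaussianReal 0 v₂) = gaussianReal 0 (v₁ + v₂) := by
  by_cases h₁ : v₁ = 0
  · simp [h₁, Measure.dirac_zero_conv]
  by_cases h₂ : v₂ = 0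
  · simp [h₂, Measure.conv_dirac_zero]
  have hsum : v₁ + v₂ ≠ 0 := fun h => h₁ (by simpa using (add_eq_zero.mp h).1)
  rw [gaussianReal_of_var_ne_zero _ h₁, gaussianReal_of_var_ne_zero _ h₂,
    gaussianReal_of_var_ne_zero _ hsum]
  set f₁ := gaussianPDF 0 v₁
  set f₂ := gaussianPDF 0 v₂
  ext s hs
  rw [Measure.conv, Measure.map_apply measurable_add hs,
    Measure.prod_apply (measurable_add hs), withDensity_apply _ hs]
  have h2 : ∀ x : ℝ, (volume.withDensity f₂) (Prod.mk x ⁻¹' ((fun p : ℝ × ℝ => p.1 + p.2) ⁻¹' s))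
      = ∫⁻ z in s, f₂ (z - x) := by
    intro x
    have hpre : (Prod.mk x ⁻¹' ((fun p : ℝ × ℝ => p.1 + p.2) ⁻¹' s)) = (fun y => x + y) ⁻¹' s := rfl
    rw [hpre, withDensity_apply _ ((measurable_const_add x) hs),
      ← lintegral_indicator ((measurable_const_add x) hs),
      ← lintegral_indicator hs]
    have : ∀ y : ℝ, Set.indicator ((fun y => x + y) ⁻¹' s) f₂ y
        = Set.indicator s (fun z => f₂ (z - x)) (x + y) := by
      intro y
      by_cases hy : x + y ∈ s
      · rw [Set.indicator_of_mem hy, Set.indicator_of_mem (by exact hy), add_sub_cancel_left]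
      · rw [Set.indicator_of_notMem hy, Set.indicator_of_notMem (by exact hy)]
    simp_rw [this]
    exact lintegral_add_left_eq_self (Set.indicator s (fun z => f₂ (z - x))) x
  simp_rw [h2]
  have hmeas2 : Measurable (fun q : ℝ × ℝ => f₁ q.1 * f₂ (q.2 - q.1)) :=
    ((measurable_gaussianPDF 0 v₁).comp measurable_fst).mul
      ((measurable_gaussianPDF 0 v₂).comp (measurable_snd.sub measurable_fst))
  rw [lintegral_withDensity_eq_lintegral_mul _ (measurable_gaussianPDF 0 v₁)
    (Measurable.lintegral_prod_right (f := fun x z => f₂ (z - x))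
      ((measurable_gaussianPDF 0 v₂).comp (measurable_snd.sub measurable_fst)))]
  have : ∀ x : ℝ, f₁ x * ∫⁻ z in s, f₂ (z - x) = ∫⁻ z in s, f₁ x * f₂ (z - x) := by
    intro x
    exact (lintegral_const_mul (f₁ x) (f := fun z => f₂ (z - x))
      ((measurable_gaussianPDF 0 v₂).comp (measurable_id.sub measurable_const))).symm
  rw [show gaussianPDF 0 v₁ = f₁ from rfl]
  simp_rw [Pi.mul_apply, this]
  rw [lintegral_lintegral_swap (hmeas2.aemeasurable)]
  congr 1
  ext z
  exact conv_pdf v₁ v₂ h₁ h₂ z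

lemma map_add_conv {Ω : Type*} [MeasurableSpace Ω] {P : Measure Ω} [IsProbabilityMeasure P]
    {X Y : Ω → ℝ} (hX : Measurable X) (hY : Measurable Y) (h : IndepFun X Y P) :
    Measure.map (X + Y) P = (Measure.map X P).conv (Measure.map Y P) := by
  rw [Measure.conv, ← (ProbabilityTheory.indepFun_iff_map_prod_eq_prod_map_map
    hX.aemeasurable hY.aemeasurable).mp h,
    Measure.map_map measurable_add (hX.prodMk hY)]
  rfl

lemma map_sum_gaussian {Ω : Type*} [MeasurableSpace Ω] (P : Measure Ω) [IsProbabilityMeasure P]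
    {n : ℕ} (f : Fin n → Ω → ℝ) (hm : ∀ i, Measurable (f i))
    (hi : iIndepFun f P) (v : Fin n → ℝ≥0)
    (hg : ∀ i, Measure.map (f i) P = gaussianReal 0 (v i)) (s : Finset (Fin n)) :
    Measure.map (fun ω => ∑ i ∈ s, f i ω) P = gaussianReal 0 (∑ i ∈ s, v i) := by
  classical
  induction s using Finset.cons_induction with
  | empty =>
      simp only [Finset.sum_empty]
      rw [Measure.map_const]
      simp
  | cons i s his ih =>
      have hsum_meas : Measurable (fun ω => ∑ j ∈ s, f j ω) := by
        exact Finset.measurable_sum s fun j _ => hm j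
      have hindep : IndepFun (fun ω => ∑ j ∈ s, f j ω) (f i) P := by
        have := hi.indepFun_finsetSum_of_notMem hm his
        have he : (∑ j ∈ s, f j) = fun ω => ∑ j ∈ s, f j ω := by
          ext ω; simp [Finset.sum_apply]
        rwa [he] at this
      have : (fun ω => ∑ j ∈ Finset.cons i s his, f j ω)
          = (fun ω => ∑ j ∈ s, f j ω) + (f i) := by
        ext ω
        rw [Finset.sum_cons]
        simp [add_comm]
      rw [this, map_add_conv hsum_meas (hm i) hindep, ih, hg i, gaussianReal_conv,
        Finset.sum_cons, add_comm]


lemma gauss_ftc (v : ℝ≥0) (hv : v ≠ 0) (t : ℝ) :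
    ∫ x in Set.Ioi t, x * rexp (-x ^ 2 / (2 * v)) = v * rexp (-t ^ 2 / (2 * v)) := by
  have hvpos : (0:ℝ) < v := lt_of_le_of_ne v.coe_nonneg (by exact_mod_cast (Ne.symm hv))
  have hderiv : ∀ x ∈ Set.Ici t,
      HasDerivAt (fun x : ℝ => -(v : ℝ) * rexp (-x ^ 2 / (2 * v)))
        (x * rexp (-x ^ 2 / (2 * v))) x := by
    intro x _
    have h1 : HasDerivAt (fun x : ℝ => -x ^ 2 / (2 * v)) (-(2 * x) / (2 * v)) x := by
      have := ((hasDerivAt_pow 2 x).neg).div_const (2 * (v:ℝ))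
      simpa using this
    have h2 := (h1.exp).const_mul (-(v:ℝ))
    refine h2.congr_deriv ?_
    field_simp
  have hint : IntegrableOn (fun x : ℝ => x * rexp (-x ^ 2 / (2 * v))) (Set.Ioi t) := by
    have hb : (0:ℝ) < 1 / (2 * v) := by positivity
    have := integrable_mul_exp_neg_mul_sq hb
    have heq : (fun x : ℝ => x * rexp (-(1 / (2 * v)) * x ^ 2))
        = fun x : ℝ => x * rexp (-x ^ 2 / (2 * v)) := by
      ext x; congr 1; field_simp
    rw [heq] at this
    exact this.integrableOn
  have htend : Tendsto (fun x : ℝ => -(v : ℝ) * rexp (-x ^ 2 / (2 * v))) atTop (nhds 0) := by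
    have h1 : Tendsto (fun x : ℝ => -x ^ 2 / (2 * v)) atTop atBot := by
      apply Tendsto.atBot_div_const (by positivity)
      exact tendsto_neg_atBot_iff.mpr (tendsto_pow_atTop (by norm_num))
    have := (Real.tendsto_exp_atBot.comp h1).const_mul (-(v:ℝ))
    simpa using this
  have := MeasureTheory.integral_Ioi_of_hasDerivAt_of_tendsto
    ((hderiv t (Set.self_mem_Ici)).continuousAt.continuousWithinAt) (fun x hx => hderiv x (Set.mem_Ici.mpr (le_of_lt hx))) hint htend
  rw [this]
  ring

lemma gauss_tail_Ioi (v : ℝ≥0) (hv : v ≠ 0) {t : ℝ} (ht : 0 < t) :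
    gaussianReal 0 v (Set.Ioi t) ≤
      ENNReal.ofReal ((Real.sqrt v / (t * Real.sqrt (2 * π))) * rexp (-t ^ 2 / (2 * v))) := by
  have hvpos : (0:ℝ) < v := lt_of_le_of_ne v.coe_nonneg (by exact_mod_cast (Ne.symm hv))
  rw [gaussianReal_apply_eq_integral _ hv]
  apply ENNReal.ofReal_le_ofReal
  have hle : ∫ x in Set.Ioi t, gaussianPDFReal 0 v x ≤
      ∫ x in Set.Ioi t, (x / t) * gaussianPDFReal 0 v x := by
    apply setIntegral_mono_on
    · exact (integrable_gaussianPDFReal 0 v).integrableOn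
    · have : IntegrableOn (fun x : ℝ => x * rexp (-x ^ 2 / (2 * v))) (Set.Ioi t) := by
        have hb : (0:ℝ) < 1 / (2 * v) := by positivity
        have := integrable_mul_exp_neg_mul_sq hb
        have heq : (fun x : ℝ => x * rexp (-(1 / (2 * v)) * x ^ 2))
            = fun x : ℝ => x * rexp (-x ^ 2 / (2 * v)) := by
          ext x; congr 1; field_simp
        rw [heq] at this
        exact this.integrableOn
      refine (this.const_mul ((Real.sqrt (2 * π * v))⁻¹ / t)).congr ?_
      apply (ae_restrict_iff' measurableSet_Ioi).mpr
      apply ae_of_all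
      intro x _
      simp only [gaussianPDFReal, sub_zero]
      ring
    · exact measurableSet_Ioi
    · intro x hx
      have hx1 : 1 ≤ x / t := (one_le_div ht).mpr (le_of_lt hx)
      nth_rewrite 1 [← one_mul (gaussianPDFReal 0 v x)]
      exact mul_le_mul_of_nonneg_right hx1 (gaussianPDFReal_nonneg _ _ _)
  refine hle.trans ?_
  have heq : ∫ x in Set.Ioi t, (x / t) * gaussianPDFReal 0 v x
      = ((Real.sqrt (2 * π * v))⁻¹ / t) * ∫ x in Set.Ioi t, x * rexp (-x ^ 2 / (2 * v)) := by
    rw [← MeasureTheory.integral_const_mul]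
    apply setIntegral_congr_fun measurableSet_Ioi
    intro x _
    simp only [gaussianPDFReal, sub_zero]
    ring
  rw [heq, gauss_ftc v hv t]
  have hsqrt : Real.sqrt (2 * π * v) = Real.sqrt (2 * π) * Real.sqrt v :=
    Real.sqrt_mul (by positivity) _
  rw [hsqrt]
  apply le_of_eq
  have h1 : (0:ℝ) < Real.sqrt (2*π) := Real.sqrt_pos.mpr (by positivity)
  have hsv : (0:ℝ) < Real.sqrt v := Real.sqrt_pos.mpr hvpos
  rw [div_eq_mul_inv (Real.sqrt (v:ℝ)) _, mul_inv]
  field_simp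
  linear_combination (-1 : ℝ) *
    (Real.sq_sqrt (NNReal.coe_nonneg v))

lemma gauss_tail_abs (v : ℝ≥0) (hv : v ≠ 0) {t : ℝ} (ht : 0 < t) :
    gaussianReal 0 v {x : ℝ | t < |x|} ≤
      ENNReal.ofReal (2 * ((Real.sqrt v / (t * Real.sqrt (2 * π))) * rexp (-t ^ 2 / (2 * v)))) := by
  have hset : {x : ℝ | t < |x|} = Set.Iio (-t) ∪ Set.Ioi t := by
    ext x
    simp only [Set.mem_setOf_eq, Set.mem_union, Set.mem_Iio, Set.mem_Ioi, lt_abs]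
    constructor
    · rintro (h | h)
      · right; exact h
      · left; linarith
    · rintro (h | h)
      · right; linarith
      · left; exact h
  have hmap : (gaussianReal 0 v).map (fun x : ℝ => -1 * x) = gaussianReal 0 v := by
    rw [gaussianReal_map_const_mul]
    norm_num
  have hneg : gaussianReal 0 v (Set.Iio (-t)) = gaussianReal 0 v (Set.Ioi t) := by
    conv_lhs => rw [← hmap]
    rw [Measure.map_apply (by fun_prop) measurableSet_Iio]
    congr 1
    ext x
    simp only [Set.mem_preimage, Set.mem_Iio, Set.mem_Ioi]
    constructor <;> intro h <;> linarith
  calc gaussianReal 0 v {x : ℝ | t < |x|}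
      ≤ gaussianReal 0 v (Set.Iio (-t)) + gaussianReal 0 v (Set.Ioi t) := by
        rw [hset]; exact measure_union_le _ _
    _ = gaussianReal 0 v (Set.Ioi t) + gaussianReal 0 v (Set.Ioi t) := by rw [hneg]
    _ ≤ ENNReal.ofReal ((Real.sqrt v / (t * Real.sqrt (2 * π))) * rexp (-t ^ 2 / (2 * v)))
        + ENNReal.ofReal ((Real.sqrt v / (t * Real.sqrt (2 * π))) * rexp (-t ^ 2 / (2 * v))) :=
        add_le_add (gauss_tail_Ioi v hv ht) (gauss_tail_Ioi v hv ht)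
    _ = ENNReal.ofReal (2 * ((Real.sqrt v / (t * Real.sqrt (2 * π))) * rexp (-t ^ 2 / (2 * v)))) := by
        rw [← ENNReal.ofReal_add (by positivity) (by positivity)]
        ring_nf

lemma arith (p : ℕ) (hp : 2 ≤ p) (σ a δ : ℝ) (hσ : 0 < σ) (ha : 0 ≤ a)
    (hδ : δ = σ * Real.sqrt (2 * (1 + a) * Real.log p)) :
    (p : ℝ) * (2 * ((σ / (δ * Real.sqrt (2 * π))) * rexp (-δ ^ 2 / (2 * σ ^ 2)))) ≤
      ((p : ℝ) ^ a * Real.sqrt (π * Real.log p))⁻¹ := by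
  have hp1 : (1:ℝ) < p := by exact_mod_cast hp.trans_lt' one_lt_two
  have hppos : (0:ℝ) < p := by linarith
  set L := Real.log p with hLdef
  have hL : 0 < L := Real.log_pos hp1
  have h1a : (0:ℝ) < 1 + a := by linarith
  have hδ2 : δ ^ 2 = σ ^ 2 * (2 * (1 + a) * L) := by
    rw [hδ, mul_pow, Real.sq_sqrt (by positivity)]
  have hexp : rexp (-δ ^ 2 / (2 * σ ^ 2)) = (p : ℝ) ^ (-(1 + a)) := by
    rw [Real.rpow_def_of_pos hppos, hδ2]
    congr 1
    field_simp
    ring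
  have hsq : δ * Real.sqrt (2 * π) = σ * (2 * Real.sqrt ((1 + a) * π * L)) := by
    rw [hδ, mul_assoc, ← Real.sqrt_mul (by positivity)]
    congr 1
    rw [show (2 * (1 + a) * L) * (2 * π) = 4 * ((1 + a) * π * L) by ring,
      Real.sqrt_mul (by norm_num), show Real.sqrt 4 = 2 by
        rw [show (4:ℝ) = 2^2 by norm_num, Real.sqrt_sq (by norm_num)]]
  have hfrac : σ / (δ * Real.sqrt (2 * π)) = 1 / (2 * Real.sqrt ((1 + a) * π * L)) := by
    rw [hsq]
    field_simp
  rw [hexp, hfrac]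
  have hsp : 0 < Real.sqrt ((1 + a) * π * L) := Real.sqrt_pos.mpr (by positivity)
  have hsp2 : 0 < Real.sqrt (π * L) := Real.sqrt_pos.mpr (by positivity)
  have hmono : Real.sqrt (π * L) ≤ Real.sqrt ((1 + a) * π * L) := by
    apply Real.sqrt_le_sqrt
    nlinarith [mul_pos Real.pi_pos hL, mul_nonneg ha (mul_pos Real.pi_pos hL).le]
  have hlhs : (p : ℝ) * (2 * (1 / (2 * Real.sqrt ((1 + a) * π * L)) * (p : ℝ) ^ (-(1 + a))))
      = (p : ℝ) ^ (-a) / Real.sqrt ((1 + a) * π * L) := by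
    have this2 : (p : ℝ) * (p : ℝ) ^ (-a + -1) = (p : ℝ) ^ (-a) := by
      rw [Real.rpow_add hppos, Real.rpow_neg_one]
      field_simp
    field_simp
    rw [show -(1 + a) = -a + -1 by ring]
    linear_combination this2
  rw [hlhs, mul_inv, ← Real.rpow_neg (le_of_lt hppos)]
  rw [div_eq_mul_inv]
  apply mul_le_mul_of_nonneg_left _ (Real.rpow_nonneg (le_of_lt hppos) _)
  exact inv_anti₀ hsp2 hmono

noncomputable section
open Classical MeasureTheory ProbabilityTheory

/-- If the columns of `X` have unit ℓ₂-norm and `ε` has i.i.d. `N(0,σ²)`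
entries, then with `δ = σ√(2(1+a)log p)` we have
`P(‖Xᵀε‖∞ ≤ δ) ≥ 1 − (pᵃ √(π log p))⁻¹`. -/
theorem stmt4 {Ω : Type*} [MeasurableSpace Ω] (P : Measure Ω) [IsProbabilityMeasure P]
    {n p : ℕ} (hp : 2 ≤ p) (X : Matrix (Fin n) (Fin p) ℝ)
    (hcols : ∀ j, ∑ i, (X i j) ^ 2 = 1)
    (σ : ℝ) (hσ : 0 < σ)
    (ε : Fin n → Ω → ℝ) (hmeas : ∀ i, Measurable (ε i))
    (hindep : iIndepFun ε P)
    (hgauss : ∀ i, Measure.map (ε i) P = gaussianReal 0 (σ ^ 2).toNNReal)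
    (a : ℝ) (ha : 0 ≤ a)
    (δ : ℝ) (hδ : δ = σ * Real.sqrt (2 * (1 + a) * Real.log p)) :
    ENNReal.ofReal (1 - ((p : ℝ) ^ a * Real.sqrt (Real.pi * Real.log p))⁻¹) ≤
      P {ω | ∀ j : Fin p, |∑ i, X i j * ε i ω| ≤ δ} := by
  classical
  have hp1 : (1:ℝ) < (p:ℝ) := by exact_mod_cast hp.trans_lt' one_lt_two
  have hL : 0 < Real.log p := Real.log_pos hp1
  have hδpos : 0 < δ := by
    rw [hδ]
    exact mul_pos hσ (Real.sqrt_pos.mpr (mul_pos (by linarith) hL))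
  set v0 : NNReal := (σ ^ 2).toNNReal with hv0
  have hv0ne : v0 ≠ 0 := by
    simp only [hv0, ne_eq, Real.toNNReal_eq_zero, not_le]
    positivity
  have hv0coe : ((v0:ℝ)) = σ ^ 2 := Real.coe_toNNReal _ (by positivity)
  have hZm : ∀ j : Fin p, Measurable (fun ω => ∑ i, X i j * ε i ω) :=
    fun j => Finset.measurable_sum _ (fun i _ => (hmeas i).const_mul _)
  have hlaw : ∀ j : Fin p,
      Measure.map (fun ω => ∑ i, X i j * ε i ω) P = gaussianReal 0 v0 := by
    intro j
    set w : Fin n → NNReal := fun i => NNReal.mk ((X i j)^2) (sq_nonneg _) * v0 with hw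
    have hindep' : iIndepFun (fun i ω => X i j * ε i ω) P :=
      hindep.comp (fun i x => X i j * x) (fun i => measurable_id.const_mul _)
    have hlaw_i : ∀ i, Measure.map (fun ω => X i j * ε i ω) P = gaussianReal 0 (w i) := by
      intro i
      have hc : (fun ω => X i j * ε i ω) = (fun x => X i j * x) ∘ ε i := rfl
      rw [hc, ← Measure.map_map (measurable_const_mul (X i j)) (hmeas i), hgauss i,
        gaussianReal_map_const_mul]
      simp [hw]
    have hms := map_sum_gaussian P _ (fun i => (hmeas i).const_mul _) hindep' w hlaw_i
      Finset.univ
    rw [hms]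
    congr 1
    apply NNReal.coe_injective
    push_cast
    simp only [hw, NNReal.coe_mul, NNReal.coe_mk, hv0coe]
    rw [← Finset.sum_mul, hcols j, one_mul]
  set Q : ℝ := 2 * ((σ / (δ * Real.sqrt (2 * Real.pi))) * Real.exp (-δ ^ 2 / (2 * σ ^ 2)))
    with hQ
  set A : Fin p → Set Ω := fun j => {ω | δ < |∑ i, X i j * ε i ω|} with hA
  have hAm : ∀ j, MeasurableSet (A j) :=
    fun j => measurableSet_lt measurable_const (hZm j).abs
  have hPA : ∀ j, P (A j) ≤ ENNReal.ofReal Q := by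
    intro j
    have hset : MeasurableSet {x : ℝ | δ < |x|} :=
      measurableSet_lt measurable_const measurable_id.abs
    have : P (A j) = (Measure.map (fun ω => ∑ i, X i j * ε i ω) P) {x : ℝ | δ < |x|} := by
      rw [Measure.map_apply (hZm j) hset]
      rfl
    rw [this, hlaw j]
    have htail := gauss_tail_abs v0 hv0ne hδpos
    have hsv : Real.sqrt (v0:ℝ) = σ := by
      rw [hv0coe, Real.sqrt_sq hσ.le]
    rw [hsv, hv0coe] at htail
    exact htail
  have hGc : {ω | ∀ j : Fin p, |∑ i, X i j * ε i ω| ≤ δ} = (⋃ j, A j)ᶜ := by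
    ext ω
    simp [hA, not_lt]
  rw [hGc, prob_compl_eq_one_sub (MeasurableSet.iUnion hAm)]
  set c : ℝ := ((p : ℝ) ^ a * Real.sqrt (Real.pi * Real.log p))⁻¹ with hc
  have hcpos : 0 < c := by
    apply inv_pos.mpr
    apply mul_pos (Real.rpow_pos_of_pos (by linarith) a)
    exact Real.sqrt_pos.mpr (mul_pos Real.pi_pos hL)
  have hU : P (⋃ j, A j) ≤ ENNReal.ofReal c := by
    calc P (⋃ j, A j) ≤ ∑' j, P (A j) := measure_iUnion_le _
      _ = ∑ j, P (A j) := tsum_fintype _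
      _ ≤ ∑ _j : Fin p, ENNReal.ofReal Q := Finset.sum_le_sum fun j _ => hPA j
      _ = (p : ℕ) • ENNReal.ofReal Q := by simp
      _ = ENNReal.ofReal ((p:ℝ) * Q) := by
          rw [nsmul_eq_mul, ← ENNReal.ofReal_natCast p,
            ← ENNReal.ofReal_mul (by positivity)]
      _ ≤ ENNReal.ofReal c := ENNReal.ofReal_le_ofReal (by
          have := arith p hp σ a δ hσ ha hδ
          rw [← hQ] at this
          exact this)
  calc ENNReal.ofReal (1 - c) = 1 - ENNReal.ofReal c := by
        rw [ENNReal.ofReal_sub _ hcpos.le, ENNReal.ofReal_one]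
    _ ≤ 1 - P (⋃ j, A j) := tsub_le_tsub_left hU 1
end
end

section
/- (Fixed-p asymptotics, support recovery.) Fix p and a vector β̃* ∈ ℝ^p with support J* = { j : β̃*_j ≠ 0 }. For each n, let Xₙ ∈ ℝ^{n×p} be a design matrix, set β*ₙ = n^{1/2} β̃*, and let yₙ = Xₙ β*ₙ + (ε₁,…,εₙ)ᵀ, where ε₁, ε₂, … are i.i.d. real random variables with mean zero and finite variance. Assume XₙᵀXₙ converges to an invertible matrix C as n → ∞, and let δₙ be a sequence with δₙ → ∞ and δₙ = o(n^{1/2}). Then the probability of the event that every solution β̂ of the Discrete Dantzig Selector problem with data (Xₙ, yₙ) and parameter δₙ satisfies { j : β̂_j ≠ 0 } = J* tends to one as n → ∞. -/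
noncomputable section
open Classical MeasureTheory ProbabilityTheory Filter Asymptotics
open scoped ENNReal Topology

/- ### Auxiliary lemmas -/

lemma key_alg {n p : ℕ} (X : Matrix (Fin n) (Fin p) ℝ) (e : Fin n → ℝ)
    (βs β : Fin p → ℝ) :
    X.transpose.mulVec ((fun i => X.mulVec βs i + e i) - X.mulVec β)
      = (X.transpose * X).mulVec (βs - β) + X.transpose.mulVec e := by
  have h0 : (fun i => X.mulVec βs i + e i) - X.mulVec β = X.mulVec (βs - β) + e := by
    funext i
    simp [Matrix.mulVec_sub]
    ring
  rw [h0, Matrix.mulVec_add, Matrix.mulVec_mulVec]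

lemma rec_bound {p : ℕ} (A : Matrix (Fin p) (Fin p) ℝ) (hdet : A.det ≠ 0)
    (v : Fin p → ℝ) (b : ℝ) (hb : ∀ k, |A.mulVec v k| ≤ b) (j : Fin p) :
    |v j| ≤ |A.det|⁻¹ * (∑ j', ∑ k, |A.adjugate j' k|) * b := by
  have hb0 : 0 ≤ b := le_trans (abs_nonneg _) (hb j)
  have hv : A.det • v = A.adjugate.mulVec (A.mulVec v) := by
    rw [Matrix.mulVec_mulVec, Matrix.adjugate_mul, Matrix.smul_mulVec, Matrix.one_mulVec]
  have hj : A.det * v j = A.adjugate.mulVec (A.mulVec v) j := congrFun hv j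
  have hvj : v j = (A.det)⁻¹ * A.adjugate.mulVec (A.mulVec v) j :=
    (eq_inv_mul_iff_mul_eq₀ hdet).mpr hj
  have hinner : |A.adjugate.mulVec (A.mulVec v) j| ≤ (∑ k, |A.adjugate j k|) * b := by
    have : A.adjugate.mulVec (A.mulVec v) j = ∑ k, A.adjugate j k * A.mulVec v k := by
      simp [Matrix.mulVec, dotProduct]
    rw [this, Finset.sum_mul]
    refine le_trans (Finset.abs_sum_le_sum_abs _ _) (Finset.sum_le_sum fun k _ => ?_)
    rw [abs_mul]
    exact mul_le_mul_of_nonneg_left (hb k) (abs_nonneg _)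
  calc |v j| = |A.det|⁻¹ * |A.adjugate.mulVec (A.mulVec v) j| := by
        rw [hvj, abs_mul, abs_inv]
    _ ≤ |A.det|⁻¹ * ((∑ k, |A.adjugate j k|) * b) := by
        exact mul_le_mul_of_nonneg_left hinner (by positivity)
    _ ≤ |A.det|⁻¹ * ((∑ j', ∑ k, |A.adjugate j' k|) * b) := by
        refine mul_le_mul_of_nonneg_left (mul_le_mul_of_nonneg_right ?_ hb0) (by positivity)
        exact Finset.single_le_sum (f := fun j' => ∑ k, |A.adjugate j' k|)
          (fun j' _ => Finset.sum_nonneg fun k _ => abs_nonneg _) (Finset.mem_univ j)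
    _ = |A.det|⁻¹ * (∑ j', ∑ k, |A.adjugate j' k|) * b := by ring

/-- Fixed-`p` asymptotics for support recovery: with `β*ₙ = √n β̃*`,
i.i.d. mean-zero finite-variance errors, `XₙᵀXₙ → C` invertible, `δₙ → ∞` and
`δₙ = o(√n)`, the probability that every Discrete Dantzig Selector solution has
support `J* = supp β̃*` tends to one. -/
theorem stmt10 {Ω : Type*} [MeasurableSpace Ω] (P : Measure Ω) [IsProbabilityMeasure P]
    {p : ℕ} (βt : Fin p → ℝ)
    (X : (n : ℕ) → Matrix (Fin n) (Fin p) ℝ)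
    (ε : ℕ → Ω → ℝ) (hmeas : ∀ i, Measurable (ε i))
    (hindep : iIndepFun ε P)
    (hident : ∀ i, Measure.map (ε i) P = Measure.map (ε 0) P)
    (hint : Integrable (ε 0) P) (hmean : ∫ ω, ε 0 ω ∂P = 0)
    (hvar : MemLp (ε 0) 2 P)
    (C : Matrix (Fin p) (Fin p) ℝ) (hC : IsUnit C.det)
    (hXC : Tendsto (fun n => (X n).transpose * (X n)) atTop (nhds C))
    (δ : ℕ → ℝ) (hδ_inf : Tendsto δ atTop atTop)
    (hδ_o : δ =o[atTop] fun n : ℕ => Real.sqrt n) :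
    Tendsto (fun n => P {ω | ∀ βhat : Fin p → ℝ,
        (Feas (X n) (fun i => (X n).mulVec (fun j => Real.sqrt n * βt j) i + ε i ω)
            (δ n) βhat ∧
          ∀ β : Fin p → ℝ,
            Feas (X n) (fun i => (X n).mulVec (fun j => Real.sqrt n * βt j) i + ε i ω)
              (δ n) β → l0 βhat ≤ l0 β) →
        {j : Fin p | βhat j ≠ 0} = {j : Fin p | βt j ≠ 0}})
      atTop (nhds 1) := by
  -- moment facts about the errors
  have hL : ∀ i, MemLp (ε i) 2 P := by
    intro i
    have h1 : MemLp id 2 (Measure.map (ε 0) P) :=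
      (memLp_map_measure_iff aestronglyMeasurable_id (hmeas 0).aemeasurable).mpr hvar
    rw [← hident i] at h1
    exact (memLp_map_measure_iff aestronglyMeasurable_id (hmeas i).aemeasurable).mp h1
  have hμ : ∀ i, ∫ ω, ε i ω ∂P = 0 := by
    intro i
    have h1 := integral_map (μ := P) (hmeas i).aemeasurable
      (f := fun x : ℝ => x) aestronglyMeasurable_id
    have h2 := integral_map (μ := P) (hmeas 0).aemeasurable
      (f := fun x : ℝ => x) aestronglyMeasurable_id
    rw [← h1, hident i, h2, hmean]
  have hm2 : ∀ i, ∫ ω, (ε i ω)^2 ∂P = ∫ ω, (ε 0 ω)^2 ∂P := by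
    intro i
    have hmsq : Measurable fun x : ℝ => x ^ 2 := by measurability
    have h1 := integral_map (μ := P) (hmeas i).aemeasurable
      (f := fun x : ℝ => x ^ 2) hmsq.aestronglyMeasurable
    have h2 := integral_map (μ := P) (hmeas 0).aemeasurable
      (f := fun x : ℝ => x ^ 2) hmsq.aestronglyMeasurable
    rw [← h1, hident i, h2]
  set σ2 : ℝ := variance (ε 0) P with hσ2
  have hvari : ∀ i, variance (ε i) P = σ2 := by
    intro i
    rw [hσ2, variance_eq_sub (hL i), variance_eq_sub (hL 0)]
    simp only [Pi.pow_apply]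
    rw [hμ i, hμ 0, hm2 i]
  -- the noise functionals  T n j ω = (Xₙᵀ ε)_j
  set T : (n : ℕ) → Fin p → Ω → ℝ := fun n j ω => ∑ i : Fin n, X n i j * ε i ω with hTdef
  have hTL : ∀ n j, MemLp (T n j) 2 P := fun n j =>
    memLp_finset_sum _ (fun (i : Fin n) _ => (hL (i : ℕ)).const_mul (X n i j))
  have hTmean : ∀ n j, ∫ ω, T n j ω ∂P = 0 := by
    intro n j
    have hintg : ∀ i ∈ Finset.univ, Integrable (fun ω => X n i j * ε (i : Fin n) ω) P :=
      fun i _ => ((hL (i : ℕ)).integrable one_le_two).const_mul (X n i j)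
    rw [hTdef]
    simp only []
    rw [integral_finset_sum _ hintg]
    simp [integral_const_mul, hμ]
  have hsum_sq : ∀ n j, ((X n).transpose * X n) j j = ∑ i : Fin n, (X n i j)^2 := by
    intro n j
    simp [Matrix.mul_apply, Matrix.transpose_apply, sq]
  have hTvar : ∀ n j, variance (T n j) P = ((X n).transpose * X n) j j * σ2 := by
    intro n j
    have hfL : ∀ i : Fin n, MemLp (fun ω => X n i j * ε i ω) 2 P :=
      fun i => (hL (i : ℕ)).const_mul _
    have heq : T n j = ∑ i : Fin n, (fun ω => X n i j * ε i ω) := by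
      funext ω; simp [hTdef]
    rw [heq, IndepFun.variance_sum (fun i _ => hfL i) ?hpair, hsum_sq]
    · rw [Finset.sum_mul]
      congr 1; funext i
      rw [show (fun ω => X n i j * ε i ω) = X n i j • ε (i : ℕ) from rfl, variance_smul,
        hvari i]
    case hpair =>
      intro i _ k _ hik
      have hik' : ((i : Fin n) : ℕ) ≠ ((k : Fin n) : ℕ) := fun h => hik (Fin.val_injective h)
      exact (hindep.indepFun hik').comp (measurable_const_mul (X n i j))
        (measurable_const_mul (X n k j))
  -- the good events
  set E : ℕ → Set Ω := fun n => {ω | ∀ j, |T n j ω| ≤ δ n} with hEdef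
  have hδpos : ∀ᶠ n in atTop, 0 < δ n := hδ_inf.eventually_gt_atTop 0
  -- convergence of the diagonal entries
  have hAjj : ∀ j : Fin p, Tendsto (fun n => ((X n).transpose * X n) j j) atTop (𝓝 (C j j)) :=
    fun j => ((continuous_id.matrix_elem j j).tendsto C).comp hXC
  -- the complement probabilities tend to zero
  have hEc : Tendsto (fun n => P (E n)ᶜ) atTop (𝓝 0) := by
    have hterm : ∀ j : Fin p, Tendsto
        (fun n => ENNReal.ofReal (((X n).transpose * X n) j j * σ2 / δ n ^ 2)) atTop (𝓝 0) := by
      intro j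
      have hsq : Tendsto (fun n => δ n ^ 2) atTop atTop := by
        have := hδ_inf.atTop_mul_atTop₀ hδ_inf
        simpa [sq] using this
      have hinv : Tendsto (fun n => (δ n ^ 2)⁻¹) atTop (𝓝 0) := hsq.inv_tendsto_atTop
      have h1 : Tendsto (fun n => ((X n).transpose * X n) j j * σ2 / δ n ^ 2) atTop (𝓝 0) := by
        have := ((hAjj j).mul_const σ2).mul hinv
        simpa [div_eq_mul_inv] using this
      have := ENNReal.tendsto_ofReal h1
      simpa using this
    have hsumlim : Tendsto
        (fun n => ∑ j : Fin p, ENNReal.ofReal (((X n).transpose * X n) j j * σ2 / δ n ^ 2))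
        atTop (𝓝 0) := by
      have := tendsto_finset_sum (Finset.univ : Finset (Fin p)) (fun j _ => hterm j)
      simpa using this
    have hbound : ∀ᶠ n in atTop, P (E n)ᶜ
        ≤ ∑ j : Fin p, ENNReal.ofReal (((X n).transpose * X n) j j * σ2 / δ n ^ 2) := by
      filter_upwards [hδpos] with n hδn
      have hcheb : ∀ j : Fin p, P {ω | δ n ≤ |T n j ω|}
          ≤ ENNReal.ofReal (((X n).transpose * X n) j j * σ2 / δ n ^ 2) := by
        intro j
        have h := meas_ge_le_variance_div_sq (μ := P) (hTL n j) hδn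
        simpa [hTmean n j, hTvar n j] using h
      have hsub : (E n)ᶜ ⊆ ⋃ j, {ω | δ n ≤ |T n j ω|} := by
        intro ω hω
        simp only [hEdef, Set.mem_compl_iff, Set.mem_setOf_eq, not_forall] at hω
        obtain ⟨j, hj⟩ := hω
        exact Set.mem_iUnion.2 ⟨j, le_of_lt (lt_of_not_ge hj)⟩
      calc P (E n)ᶜ ≤ P (⋃ j, {ω | δ n ≤ |T n j ω|}) := measure_mono hsub
        _ ≤ ∑' j, P {ω | δ n ≤ |T n j ω|} := measure_iUnion_le _
        _ = ∑ j, P {ω | δ n ≤ |T n j ω|} := tsum_fintype _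
        _ ≤ _ := Finset.sum_le_sum fun j _ => hcheb j
    exact tendsto_of_tendsto_of_tendsto_of_le_of_le' tendsto_const_nhds hsumlim
      (Eventually.of_forall fun n => zero_le) hbound
  -- lower bound tends to 1
  have hlow : Tendsto (fun n => 1 - P (E n)ᶜ) atTop (𝓝 1) := by
    have := ENNReal.Tendsto.sub (tendsto_const_nhds (x := (1 : ℝ≥0∞))) hEc
      (Or.inl ENNReal.one_ne_top)
    simpa using this
  have hEl : ∀ n, 1 - P (E n)ᶜ ≤ P (E n) := by
    intro n
    rw [tsub_le_iff_right]
    calc (1 : ℝ≥0∞) = P Set.univ := (measure_univ (μ := P)).symm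
      _ = P (E n ∪ (E n)ᶜ) := by rw [Set.union_compl_self]
      _ ≤ P (E n) + P (E n)ᶜ := measure_union_le _ _
  -- deterministic quantities for the design matrices
  set g : ℕ → ℝ := fun n =>
    |((X n).transpose * X n).det|⁻¹
      * ∑ j', ∑ k, |((X n).transpose * X n).adjugate j' k| with hgdef
  have hdetC : C.det ≠ 0 := hC.ne_zero
  have hdet_t : Tendsto (fun n => ((X n).transpose * X n).det) atTop (𝓝 C.det) :=
    (continuous_id.matrix_det.tendsto C).comp hXC
  have ev_det : ∀ᶠ n in atTop, ((X n).transpose * X n).det ≠ 0 := hdet_t.eventually_ne hdetC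
  have hg_t : Tendsto g atTop
      (𝓝 (|C.det|⁻¹ * ∑ j', ∑ k, |C.adjugate j' k|)) := by
    have h1 : Tendsto (fun n => |((X n).transpose * X n).det|) atTop (𝓝 |C.det|) := hdet_t.abs
    have h2 := h1.inv₀ (abs_ne_zero.2 hdetC)
    have hadjE : ∀ j' k : Fin p, Tendsto
        (fun n => |((X n).transpose * X n).adjugate j' k|) atTop (𝓝 |C.adjugate j' k|) := by
      intro j' k
      exact (((continuous_id.matrix_adjugate.matrix_elem j' k).tendsto C).comp hXC).abs
    have h3 : Tendsto (fun n => ∑ j', ∑ k, |((X n).transpose * X n).adjugate j' k|)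
        atTop (𝓝 (∑ j', ∑ k, |C.adjugate j' k|)) :=
      tendsto_finset_sum _ fun j' _ => tendsto_finset_sum _ fun k _ => hadjE j' k
    exact h2.mul h3
  have hglittle : (fun n => g n * (2 * δ n)) =o[atTop] (fun n : ℕ => Real.sqrt n) := by
    have hO : g =O[atTop] (fun _ : ℕ => (1 : ℝ)) := hg_t.isBigO_one ℝ
    have := hO.mul_isLittleO (hδ_o.const_mul_left 2)
    simpa using this
  -- eventually the separation condition holds
  have ev_j : ∀ᶠ n in atTop, ∀ j : Fin p, βt j ≠ 0 →
      g n * (2 * δ n) < Real.sqrt n * |βt j| := by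
    rw [eventually_all]
    intro j
    by_cases hj : βt j = 0
    · filter_upwards with n hn; exact (hn hj).elim
    · have hpos : 0 < |βt j| := abs_pos.2 hj
      have h1 := hglittle.def (half_pos hpos)
      filter_upwards [h1, eventually_ge_atTop 1] with n hn hn1 _
      have hsq1 : 1 ≤ Real.sqrt n := by
        rw [show (1 : ℝ) = Real.sqrt 1 by simp]
        exact Real.sqrt_le_sqrt (by exact_mod_cast hn1)
      have hsqpos : 0 < Real.sqrt n := lt_of_lt_of_le one_pos hsq1
      have hn' : |g n * (2 * δ n)| ≤ |βt j| / 2 * Real.sqrt n := by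
        have := hn
        rw [Real.norm_eq_abs, Real.norm_eq_abs, abs_of_pos hsqpos] at this
        exact this
      calc g n * (2 * δ n) ≤ |g n * (2 * δ n)| := le_abs_self _
        _ ≤ |βt j| / 2 * Real.sqrt n := hn'
        _ < |βt j| * Real.sqrt n := mul_lt_mul_of_pos_right (half_lt_self hpos) hsqpos
        _ = Real.sqrt n * |βt j| := mul_comm _ _
  -- the deterministic inclusion
  have hincl : ∀ᶠ n in atTop, E n ⊆ {ω | ∀ βhat : Fin p → ℝ,
      (Feas (X n) (fun i => (X n).mulVec (fun j => Real.sqrt n * βt j) i + ε i ω)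
          (δ n) βhat ∧
        ∀ β : Fin p → ℝ,
          Feas (X n) (fun i => (X n).mulVec (fun j => Real.sqrt n * βt j) i + ε i ω)
            (δ n) β → l0 βhat ≤ l0 β) →
      {j : Fin p | βhat j ≠ 0} = {j : Fin p | βt j ≠ 0}} := by
    filter_upwards [ev_det, ev_j, hδpos, eventually_ge_atTop 1] with n hdet hj hδn hn1
    intro ω hω βhat hhat
    obtain ⟨hfeas, hmin⟩ := hhat
    have hω' : ∀ j, |T n j ω| ≤ δ n := hω
    have hsqpos : 0 < Real.sqrt n := Real.sqrt_pos.2 (by exact_mod_cast hn1)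
    set βs : Fin p → ℝ := fun j => Real.sqrt n * βt j with hβs
    -- identify the noise functional
    have hTe : (X n).transpose.mulVec (fun i => ε i ω) = fun j => T n j ω := by
      funext j
      simp [Matrix.mulVec, dotProduct, Matrix.transpose_apply, hTdef]
    have hkey : ∀ β : Fin p → ℝ,
        (X n).transpose.mulVec
            ((fun i => (X n).mulVec βs i + ε i ω) - (X n).mulVec β)
          = ((X n).transpose * X n).mulVec (βs - β) + fun j => T n j ω := by
      intro β
      rw [key_alg (X n) (fun i => ε i ω) βs β, hTe]
    -- βs is feasible
    have hfeas_s : Feas (X n) (fun i => (X n).mulVec βs i + ε i ω) (δ n) βs := by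
      intro j
      rw [hkey βs]
      simpa [Matrix.mulVec_zero] using hω' j
    -- every feasible β is close to βs
    have hrec : ∀ β : Fin p → ℝ,
        Feas (X n) (fun i => (X n).mulVec βs i + ε i ω) (δ n) β →
        ∀ k, |βs k - β k| ≤ g n * (2 * δ n) := by
      intro β hf k
      have hAb : ∀ k', |((X n).transpose * X n).mulVec (βs - β) k'| ≤ 2 * δ n := by
        intro k'
        have h1 := hf k'
        rw [hkey β] at h1
        have h2 := hω' k'
        have h3 : ((X n).transpose * X n).mulVec (βs - β) k'
            = (((X n).transpose * X n).mulVec (βs - β) + fun j => T n j ω) k' - T n k' ω := by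
          simp
        rw [h3]
        calc |(((X n).transpose * X n).mulVec (βs - β) + fun j => T n j ω) k' - T n k' ω|
            ≤ |(((X n).transpose * X n).mulVec (βs - β) + fun j => T n j ω) k'| + |T n k' ω| :=
              abs_sub _ _
          _ ≤ δ n + δ n := add_le_add h1 h2
          _ = 2 * δ n := by ring
      have := rec_bound ((X n).transpose * X n) hdet (βs - β) (2 * δ n) hAb k
      rw [hgdef]
      simpa [mul_assoc] using this
    -- every feasible β has full support on J*
    have hsupp : ∀ β : Fin p → ℝ,
        Feas (X n) (fun i => (X n).mulVec βs i + ε i ω) (δ n) β →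
        ∀ j, βt j ≠ 0 → β j ≠ 0 := by
      intro β hf j hj0
      have h1 := hrec β hf j
      have h2 := hj j hj0
      have habs : |βs j| = Real.sqrt n * |βt j| := by
        rw [hβs]
        simp [abs_mul, abs_of_pos hsqpos]
      have h3 : |βs j| - |β j| ≤ |βs j - β j| := abs_sub_abs_le_abs_sub _ _
      have hpos : 0 < |β j| := by
        rw [habs] at h3
        linarith
      exact abs_pos.mp hpos
    -- cardinality comparison
    have hl0s : l0 βs = l0 βt := by
      unfold l0
      congr 1
      apply Finset.filter_congr
      intro j _
      simp only [hβs]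
      constructor
      · intro h hc; exact h (by rw [hc, mul_zero])
      · intro h hc; exact h (by
          rcases mul_eq_zero.mp hc with h' | h'
          · exact absurd h' (ne_of_gt hsqpos)
          · exact absurd h' h)
    have hcard : l0 βhat ≤ l0 βt := hl0s ▸ hmin βs hfeas_s
    -- finish with the finset argument
    have hfsub : (Finset.univ.filter fun j => βt j ≠ 0)
        ⊆ Finset.univ.filter fun j => βhat j ≠ 0 := by
      intro j hjm
      rw [Finset.mem_filter] at hjm ⊢
      exact ⟨hjm.1, hsupp βhat hfeas j hjm.2⟩
    have heqf : (Finset.univ.filter fun j => βt j ≠ 0)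
        = Finset.univ.filter fun j => βhat j ≠ 0 :=
      Finset.eq_of_subset_of_card_le hfsub hcard
    ext j
    simp only [Set.mem_setOf_eq]
    constructor
    · intro hj'
      have : j ∈ Finset.univ.filter fun j => βhat j ≠ 0 := by
        rw [Finset.mem_filter]; exact ⟨Finset.mem_univ _, hj'⟩
      rw [← heqf, Finset.mem_filter] at this
      exact this.2
    · intro hj'
      have : j ∈ Finset.univ.filter fun j => βt j ≠ 0 := by
        rw [Finset.mem_filter]; exact ⟨Finset.mem_univ _, hj'⟩
      rw [heqf, Finset.mem_filter] at this
      exact this.2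
  -- squeeze
  refine tendsto_of_tendsto_of_tendsto_of_le_of_le' hlow tendsto_const_nhds ?_ ?_
  · filter_upwards [hincl] with n hn
    exact le_trans (hEl n) (measure_mono hn)
  · filter_upwards with n
    exact prob_le_one
end
end

section
/- (Fixed-p asymptotics, truth and oracle are solutions.) Fix p and a vector β̃* ∈ ℝ^p with support J* = { j : β̃*_j ≠ 0 }. For each n, let Xₙ ∈ ℝ^{n×p} be a design matrix, set β*ₙ = n^{1/2} β̃*, and let yₙ = Xₙ β*ₙ + (ε₁,…,εₙ)ᵀ, where ε₁, ε₂, … are i.i.d. real random variables with mean zero and finite variance. Assume XₙᵀXₙ converges to an invertible matrix C as n → ∞, and let δₙ be a sequence with δₙ → ∞ and δₙ = o(n^{1/2}). Then the probability of the event that both β*ₙ and the Oracle estimator β̂ᴼₙ belong to the set of solutions of the Discrete Dantzig Selector problem with data (Xₙ, yₙ) and parameter δₙ tends to one as n → ∞. -/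
noncomputable section
open Classical MeasureTheory ProbabilityTheory Filter Asymptotics

/-- `β` is a solution of the Discrete Dantzig Selector problem with data `(X, y, δ)`. -/
def IsDDSSol {n p : ℕ} (X : Matrix (Fin n) (Fin p) ℝ) (y : Fin n → ℝ) (δ : ℝ)
    (β : Fin p → ℝ) : Prop :=
  Feas X y δ β ∧ ∀ β' : Fin p → ℝ, Feas X y δ β' → l0 β ≤ l0 β'

/-- The least-squares estimator restricted to the columns in `J`, viewed as a vector in
`ℝ^p` supported on `J`: on `J` it equals `(X_Jᵀ X_J)⁻¹ X_Jᵀ y`. -/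
def restrictedLS {n p : ℕ} (J : Finset (Fin p)) (X : Matrix (Fin n) (Fin p) ℝ)
    (y : Fin n → ℝ) : Fin p → ℝ :=
  fun j =>
    if h : j ∈ J then
      (((X.submatrix id (Subtype.val : {x // x ∈ J} → Fin p)).transpose *
            X.submatrix id (Subtype.val : {x // x ∈ J} → Fin p))⁻¹.mulVec
          ((X.submatrix id (Subtype.val : {x // x ∈ J} → Fin p)).transpose.mulVec y))
        ⟨j, h⟩
    else 0

open scoped ENNReal

section Helpers
variable {p : ℕ}

/-- extension by zero -/
def ext0 (J : Finset (Fin p)) (v : {x // x ∈ J} → ℝ) : Fin p → ℝ :=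
  fun j => if h : j ∈ J then v ⟨j, h⟩ else 0

lemma ext0_val (J : Finset (Fin p)) (v : {x // x ∈ J} → ℝ) (a : {x // x ∈ J}) :
    ext0 J v a.val = v a := by
  simp [ext0, a.2]

lemma mulVec_ext0 {n : ℕ} (J : Finset (Fin p)) (M : Matrix (Fin n) (Fin p) ℝ)
    (v : {x // x ∈ J} → ℝ) :
    M.mulVec (ext0 J v) = (M.submatrix id (Subtype.val : {x // x ∈ J} → Fin p)).mulVec v := by
  funext i
  simp only [Matrix.mulVec, dotProduct, Matrix.submatrix_apply, id]
  rw [← Finset.sum_subset J.subset_univ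
      (fun x _ hx => by simp [ext0, hx]),
    ← Finset.sum_attach J (fun j => M i j * ext0 J v j)]
  exact Finset.sum_congr rfl fun a _ => by rw [ext0_val]

lemma ext0_dot (J : Finset (Fin p)) (v : {x // x ∈ J} → ℝ) (w : Fin p → ℝ) :
    dotProduct (ext0 J v) w = ∑ a : {x // x ∈ J}, v a * w a.val := by
  simp only [dotProduct]
  rw [← Finset.sum_subset J.subset_univ (fun x _ hx => by simp [ext0, hx]),
    ← Finset.sum_attach J (fun j => ext0 J v j * w j), Finset.univ_eq_attach]
  exact Finset.sum_congr rfl fun a _ => by rw [ext0_val]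

lemma mulVec_ext0' {ι : Type*} [Fintype ι] (J : Finset (Fin p)) (M : Matrix ι (Fin p) ℝ)
    (v : {x // x ∈ J} → ℝ) :
    M.mulVec (ext0 J v) = (M.submatrix id (Subtype.val : {x // x ∈ J} → Fin p)).mulVec v := by
  funext i
  simp only [Matrix.mulVec, dotProduct, Matrix.submatrix_apply, id]
  rw [← Finset.sum_subset J.subset_univ (fun x _ hx => by simp [ext0, hx]),
    ← Finset.sum_attach J (fun j => M i j * ext0 J v j)]
  exact Finset.sum_congr rfl fun a _ => by rw [ext0_val]

lemma entry_tendsto {ι κ : Type*} {M : ℕ → Matrix ι κ ℝ} {L : Matrix ι κ ℝ}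
    (h : Filter.Tendsto M Filter.atTop (nhds L)) (i : ι) (j : κ) :
    Filter.Tendsto (fun n => M n i j) Filter.atTop (nhds (L i j)) :=
  tendsto_pi_nhds.mp (tendsto_pi_nhds.mp h i) j

lemma ev_entry_bound {ι κ : Type*} [Fintype ι] [Fintype κ] {M : ℕ → Matrix ι κ ℝ}
    {L : Matrix ι κ ℝ} (h : Filter.Tendsto M Filter.atTop (nhds L)) :
    ∃ K : ℝ, 0 < K ∧ ∀ᶠ n in Filter.atTop, ∀ i j, |M n i j| ≤ K := by
  refine ⟨1 + ∑ i, ∑ j, |L i j|, by positivity, ?_⟩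
  rw [Filter.eventually_all]
  intro i
  rw [Filter.eventually_all]
  intro j
  have h1 := (entry_tendsto h i j).eventually (Metric.ball_mem_nhds (L i j) one_pos)
  filter_upwards [h1] with n hn
  have : |M n i j - L i j| < 1 := by simpa [Real.dist_eq] using hn
  have h2 : |L i j| ≤ ∑ i, ∑ j, |L i j| := by
    calc |L i j| ≤ ∑ j, |L i j| :=
          Finset.single_le_sum (f := fun j => |L i j|) (fun k _ => abs_nonneg _)
            (Finset.mem_univ j)
    _ ≤ ∑ i, ∑ j, |L i j| :=
          Finset.single_le_sum (f := fun i => ∑ j, |L i j|)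
            (fun k _ => Finset.sum_nonneg fun _ _ => abs_nonneg _) (Finset.mem_univ i)
  calc |M n i j| ≤ |M n i j - L i j| + |L i j| := by
        simpa using abs_add_le (M n i j - L i j) (L i j)
  _ ≤ 1 + ∑ i, ∑ j, |L i j| := by linarith

lemma tendsto_inv_matrix {ι : Type*} [Fintype ι] [DecidableEq ι] {G : ℕ → Matrix ι ι ℝ}
    {L : Matrix ι ι ℝ} (h : Filter.Tendsto G Filter.atTop (nhds L)) (hL : IsUnit L.det) :
    Filter.Tendsto (fun n => (G n)⁻¹) Filter.atTop (nhds L⁻¹) ∧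
      ∀ᶠ n in Filter.atTop, IsUnit (G n).det := by
  have hdet : Filter.Tendsto (fun n => (G n).det) Filter.atTop (nhds L.det) :=
    ((continuous_id.matrix_det).continuousAt.tendsto).comp h
  constructor
  · have hc : ContinuousAt Inv.inv L := by
      apply continuousAt_matrix_inv
      rw [Ring.inverse_eq_inv']
      exact continuousAt_inv₀ (isUnit_iff_ne_zero.mp hL)
    exact hc.tendsto.comp h
  · filter_upwards [hdet.eventually_ne (isUnit_iff_ne_zero.mp hL)] with n hn
    exact isUnit_iff_ne_zero.mpr hn

lemma psd_limit {ι : Type*} [Fintype ι] {G : ℕ → Matrix ι ι ℝ} {L : Matrix ι ι ℝ}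
    (hpsd : ∀ n, (G n).PosSemidef) (h : Filter.Tendsto G Filter.atTop (nhds L)) :
    L.PosSemidef := by
  refine Matrix.PosSemidef.of_dotProduct_mulVec_nonneg ?_ ?_
  · show L.conjTranspose = L
    ext i j
    have h1 : Filter.Tendsto (fun n => G n i j) Filter.atTop (nhds (L j i)) := by
      have := entry_tendsto h j i
      refine this.congr fun n => ?_
      have := (hpsd n).1
      calc G n j i = (G n).conjTranspose j i := by rw [this]
      _ = star (G n i j) := rfl
      _ = G n i j := by simp
    have h2 := entry_tendsto h i j
    have : L j i = L i j := tendsto_nhds_unique h1 h2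
    simpa [Matrix.conjTranspose_apply] using this
  · intro x
    have hc : Continuous fun A : Matrix ι ι ℝ => dotProduct (star x) (A.mulVec x) :=
      Continuous.dotProduct continuous_const (continuous_id.matrix_mulVec continuous_const)
    have ht := (hc.continuousAt.tendsto).comp h
    exact le_of_tendsto_of_tendsto' tendsto_const_nhds ht fun n => (hpsd n).dotProduct_mulVec_nonneg x

lemma dot_ext0_sub (J : Finset (Fin p)) (L : Matrix (Fin p) (Fin p) ℝ)
    (v : {x // x ∈ J} → ℝ) :
    dotProduct (ext0 J v) (L.mulVec (ext0 J v)) =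
      dotProduct v
        ((L.submatrix (Subtype.val : {x // x ∈ J} → Fin p) Subtype.val).mulVec v) := by
  rw [ext0_dot, mulVec_ext0']
  refine Finset.sum_congr rfl fun a _ => ?_
  congr 1

lemma isUnit_det_submatrix {L : Matrix (Fin p) (Fin p) ℝ} (hpsd : L.PosSemidef)
    (hdet : IsUnit L.det) (J : Finset (Fin p)) :
    IsUnit (L.submatrix (Subtype.val : {x // x ∈ J} → Fin p) Subtype.val).det := by
  rw [← Matrix.isUnit_iff_isUnit_det, ← Matrix.mulVec_injective_iff_isUnit]
  set LJ := L.submatrix (Subtype.val : {x // x ∈ J} → Fin p) Subtype.val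
  have key : ∀ v, LJ.mulVec v = 0 → v = 0 := by
    intro v hv
    have h0 : dotProduct (star (ext0 J v)) (L.mulVec (ext0 J v)) = 0 := by
      rw [star_trivial, dot_ext0_sub, hv, dotProduct_zero]
    have hLw : L.mulVec (ext0 J v) = 0 := (hpsd.dotProduct_mulVec_zero_iff (ext0 J v)).mp h0
    have hinj : Function.Injective L.mulVec := Matrix.mulVec_injective_iff_isUnit.mpr
      ((Matrix.isUnit_iff_isUnit_det L).mpr hdet)
    have hw : ext0 J v = 0 := by
      apply hinj
      rw [hLw, Matrix.mulVec_zero]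
    funext a
    have := congrFun hw a.val
    rwa [ext0_val] at this
  intro v v' hvv
  have : LJ.mulVec (v - v') = 0 := by
    rw [Matrix.mulVec_sub, hvv, sub_self]
  have := key _ this
  exact sub_eq_zero.mp this

end Helpers

section Prob
variable {Ω : Type*} [MeasurableSpace Ω] {P : Measure Ω} [IsProbabilityMeasure P]

lemma memLp_of_ident {ε : ℕ → Ω → ℝ} (hmeas : ∀ i, Measurable (ε i))
    (hident : ∀ i, Measure.map (ε i) P = Measure.map (ε 0) P)
    (hvar : MemLp (ε 0) 2 P) (i : ℕ) : MemLp (ε i) 2 P := by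
  have h0 : MemLp (id : ℝ → ℝ) 2 (Measure.map (ε 0) P) := by
    rw [memLp_map_measure_iff aestronglyMeasurable_id (hmeas 0).aemeasurable]
    exact hvar
  have : MemLp (id : ℝ → ℝ) 2 (Measure.map (ε i) P) := by rw [hident i]; exact h0
  rw [memLp_map_measure_iff aestronglyMeasurable_id (hmeas i).aemeasurable] at this
  exact this

lemma integral_of_ident {ε : ℕ → Ω → ℝ} (hmeas : ∀ i, Measurable (ε i))
    (hident : ∀ i, Measure.map (ε i) P = Measure.map (ε 0) P) (i : ℕ)
    (g : ℝ → ℝ) (hg : Measurable g) :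
    ∫ ω, g (ε i ω) ∂P = ∫ ω, g (ε 0 ω) ∂P := by
  rw [← integral_map (hmeas i).aemeasurable hg.aestronglyMeasurable, hident i,
    integral_map (hmeas 0).aemeasurable hg.aestronglyMeasurable]

lemma variance_of_ident {ε : ℕ → Ω → ℝ} (hmeas : ∀ i, Measurable (ε i))
    (hident : ∀ i, Measure.map (ε i) P = Measure.map (ε 0) P)
    (hvar : MemLp (ε 0) 2 P) (i : ℕ) :
    variance (ε i) P = variance (ε 0) P := by
  rw [variance_eq_sub (memLp_of_ident hmeas hident hvar i), variance_eq_sub hvar]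
  have h1 : ∫ ω, (ε i ω) ^ 2 ∂P = ∫ ω, (ε 0 ω) ^ 2 ∂P :=
    integral_of_ident hmeas hident i (fun x => x ^ 2) (measurable_id.pow_const 2)
  have h2 : ∫ ω, ε i ω ∂P = ∫ ω, ε 0 ω ∂P :=
    integral_of_ident hmeas hident i id measurable_id
  simp only [Pi.pow_apply] at *
  rw [h1, h2]

lemma cheb_sum {ε : ℕ → Ω → ℝ} (hmeas : ∀ i, Measurable (ε i))
    (hindep : iIndepFun ε P)
    (hident : ∀ i, Measure.map (ε i) P = Measure.map (ε 0) P)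
    (hmean : ∫ ω, ε 0 ω ∂P = 0) (hvar : MemLp (ε 0) 2 P)
    {n : ℕ} (a : Fin n → ℝ) {c : ℝ} (hc : 0 < c) :
    P {ω | c ≤ |∑ i : Fin n, a i * ε i ω|} ≤
      ENNReal.ofReal ((∑ i : Fin n, (a i) ^ 2) * variance (ε 0) P / c ^ 2) := by
  set f : Fin n → Ω → ℝ := fun i ω => a i * ε i ω with hf
  have hL2i : ∀ i : Fin n, MemLp (f i) 2 P :=
    fun i => (memLp_of_ident hmeas hident hvar i).const_mul (a i)
  have hTL2 : MemLp (∑ i, f i) 2 P := memLp_finset_sum' _ (fun i _ => hL2i i)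
  have hmean_i : ∀ i : Fin n, ∫ ω, f i ω ∂P = 0 := by
    intro i
    have : ∫ ω, ε (i : ℕ) ω ∂P = 0 := by
      rw [show (fun ω => ε (i : ℕ) ω) = (fun ω => id (ε (i : ℕ) ω)) from rfl,
        integral_of_ident hmeas hident i id measurable_id]
      exact hmean
    simp only [hf, integral_const_mul, this, mul_zero]
  have hTmean : ∫ ω, (∑ i, f i) ω ∂P = 0 := by
    simp only [Finset.sum_apply]
    rw [integral_finset_sum _ (fun i _ => (hL2i i).integrable one_le_two)]
    simp [hmean_i]
  have hpair : Set.Pairwise ((Finset.univ : Finset (Fin n)) : Set (Fin n))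
      fun i j => IndepFun (f i) (f j) P := by
    intro i _ j _ hij
    exact (hindep.indepFun (Fin.val_injective.ne hij)).comp
      (measurable_const_mul (a i)) (measurable_const_mul (a j))
  have hvarT : variance (∑ i, f i) P = (∑ i : Fin n, (a i) ^ 2) * variance (ε 0) P := by
    rw [IndepFun.variance_sum (fun i _ => hL2i i) hpair, Finset.sum_mul]
    refine Finset.sum_congr rfl fun i _ => ?_
    rw [hf]
    rw [variance_const_mul (a i) (ε (i : ℕ)) P, variance_of_ident hmeas hident hvar i]
  have hcheb := meas_ge_le_variance_div_sq hTL2 hc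
  rw [hvarT] at hcheb
  have hTmean' : (∫ x, ∑ i : Fin n, f i x ∂P) = 0 := by
    simpa only [Finset.sum_apply] using hTmean
  have hset : {ω | c ≤ |∑ i : Fin n, a i * ε i ω|} =
      {ω | c ≤ |(∑ i, f i) ω - ∫ x, (∑ i, f i) x ∂P|} := by
    ext ω
    simp only [Set.mem_setOf_eq, Finset.sum_apply, hTmean', sub_zero]
    rfl
  rw [hset]
  exact hcheb

lemma prob_event {p : ℕ} {ε : ℕ → Ω → ℝ} (hmeas : ∀ i, Measurable (ε i))
    (hindep : iIndepFun ε P)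
    (hident : ∀ i, Measure.map (ε i) P = Measure.map (ε 0) P)
    (hmean : ∫ ω, ε 0 ω ∂P = 0) (hvar : MemLp (ε 0) 2 P)
    (X : (n : ℕ) → Matrix (Fin n) (Fin p) ℝ) {KG : ℝ}
    (hKG : 0 < KG)
    (hbound : ∀ᶠ n in Filter.atTop, ∀ j : Fin p, ∑ i : Fin n, (X n i j) ^ 2 ≤ KG)
    (δ' : ℕ → ℝ) (hδ'inf : Filter.Tendsto δ' Filter.atTop Filter.atTop) :
    Filter.Tendsto
      (fun n => P {ω | ∀ j : Fin p, |∑ i : Fin n, X n i j * ε i ω| ≤ δ' n})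
      Filter.atTop (nhds 1) := by
  set V := variance (ε 0) P with hV
  have hV0 : 0 ≤ V := variance_nonneg _ _
  set B : (n : ℕ) → Set Ω := fun n => {ω | ∀ j : Fin p, |∑ i : Fin n, X n i j * ε i ω| ≤ δ' n}
    with hB
  have hmeasB : ∀ n, MeasurableSet (B n) := by
    intro n
    have : B n = ⋂ j : Fin p, {ω | |∑ i : Fin n, X n i j * ε i ω| ≤ δ' n} := by
      ext ω; simp [hB, Set.mem_iInter]
    rw [this]
    refine MeasurableSet.iInter fun j => ?_
    have hT : Measurable fun ω => ∑ i : Fin n, X n i j * ε i ω :=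
      Finset.measurable_sum _ fun i _ => (hmeas i).const_mul _
    exact measurableSet_le hT.abs measurable_const
  have hcompl : ∀ᶠ n in Filter.atTop,
      P (B n)ᶜ ≤ ENNReal.ofReal ((p * KG * V) / δ' n ^ 2) := by
    filter_upwards [hbound, hδ'inf.eventually_gt_atTop 0] with n hb hδpos
    have hsub : (B n)ᶜ ⊆ ⋃ j : Fin p, {ω | δ' n ≤ |∑ i : Fin n, X n i j * ε i ω|} := by
      intro ω hω
      simp only [hB, Set.mem_compl_iff, Set.mem_setOf_eq, not_forall] at hω
      obtain ⟨j, hj⟩ := hω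
      exact Set.mem_iUnion.mpr ⟨j, le_of_lt (lt_of_not_ge hj)⟩
    refine le_trans (le_trans (measure_mono hsub) (measure_iUnion_fintype_le _ _)) ?_
    have hone : ∀ j : Fin p,
        P {ω | δ' n ≤ |∑ i : Fin n, X n i j * ε i ω|} ≤
          ENNReal.ofReal (KG * V / δ' n ^ 2) := by
      intro j
      refine le_trans (cheb_sum hmeas hindep hident hmean hvar _ hδpos) ?_
      apply ENNReal.ofReal_le_ofReal
      apply div_le_div_of_nonneg_right ?_ (by positivity)
      exact mul_le_mul_of_nonneg_right (hb j) hV0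
    calc (∑ j : Fin p, P {ω | δ' n ≤ |∑ i : Fin n, X n i j * ε i ω|})
        ≤ ∑ j : Fin p, ENNReal.ofReal (KG * V / δ' n ^ 2) :=
          Finset.sum_le_sum fun j _ => hone j
      _ = (p : ℝ≥0∞) * ENNReal.ofReal (KG * V / δ' n ^ 2) := by
          rw [Finset.sum_const, Finset.card_univ, Fintype.card_fin, nsmul_eq_mul]
      _ = ENNReal.ofReal ((p * KG * V) / δ' n ^ 2) := by
          rw [← ENNReal.ofReal_natCast p, ← ENNReal.ofReal_mul (by positivity)]
          congr 1
          field_simp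
  have hr0 : Filter.Tendsto (fun n => ENNReal.ofReal ((p * KG * V) / δ' n ^ 2))
      Filter.atTop (nhds 0) := by
    have h2 : Filter.Tendsto (fun n => δ' n ^ 2) Filter.atTop Filter.atTop :=
      (tendsto_pow_atTop (two_ne_zero)).comp hδ'inf
    have h3 : Filter.Tendsto (fun n => (p * KG * V) / δ' n ^ 2) Filter.atTop (nhds 0) := by
      simpa only [div_eq_mul_inv, Pi.inv_apply] using
        (tendsto_const_nhds (x := (p * KG * V : ℝ))).mul h2.inv_tendsto_atTop |>.congr
          (fun n => rfl) |>.mono_right (by rw [mul_zero])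
    have := (ENNReal.continuous_ofReal.tendsto 0).comp h3
    rwa [ENNReal.ofReal_zero] at this
  have hPB : Filter.Tendsto (fun n => P (B n)ᶜ) Filter.atTop (nhds 0) :=
    tendsto_of_tendsto_of_tendsto_of_le_of_le' tendsto_const_nhds hr0
      (Filter.Eventually.of_forall fun n => zero_le) hcompl
  have hfinal : Filter.Tendsto (fun n => 1 - P (B n)ᶜ) Filter.atTop (nhds 1) := by
    have := ENNReal.Tendsto.sub (tendsto_const_nhds (x := (1 : ℝ≥0∞))) hPB
      (Or.inl ENNReal.one_ne_top)
    simpa using this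
  refine hfinal.congr fun n => ?_
  rw [← prob_compl_eq_one_sub (hmeasB n).compl, compl_compl]

end Prob

set_option maxHeartbeats 2000000 in
/-- Fixed-`p` asymptotics: with probability tending to one, both the true
coefficient vector `β*ₙ = √n β̃*` and the Oracle estimator belong to the set of solutions
of the Discrete Dantzig Selector problem. -/
theorem stmt11 {Ω : Type*} [MeasurableSpace Ω] (P : Measure Ω) [IsProbabilityMeasure P]
    {p : ℕ} (βt : Fin p → ℝ)
    (X : (n : ℕ) → Matrix (Fin n) (Fin p) ℝ)
    (ε : ℕ → Ω → ℝ) (hmeas : ∀ i, Measurable (ε i))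
    (hindep : iIndepFun ε P)
    (hident : ∀ i, Measure.map (ε i) P = Measure.map (ε 0) P)
    (hint : Integrable (ε 0) P) (hmean : ∫ ω, ε 0 ω ∂P = 0)
    (hvar : MemLp (ε 0) 2 P)
    (C : Matrix (Fin p) (Fin p) ℝ) (hC : IsUnit C.det)
    (hXC : Tendsto (fun n => (X n).transpose * (X n)) atTop (nhds C))
    (δ : ℕ → ℝ) (hδ_inf : Tendsto δ atTop atTop)
    (hδ_o : δ =o[atTop] fun n : ℕ => Real.sqrt n) :
    Tendsto (fun n => P {ω |
        IsDDSSol (X n) (fun i => (X n).mulVec (fun j => Real.sqrt n * βt j) i + ε i ω)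
          (δ n) (fun j => Real.sqrt n * βt j) ∧
        IsDDSSol (X n) (fun i => (X n).mulVec (fun j => Real.sqrt n * βt j) i + ε i ω)
          (δ n)
          (restrictedLS (Finset.univ.filter fun j => βt j ≠ 0) (X n)
            (fun i => (X n).mulVec (fun j => Real.sqrt n * βt j) i + ε i ω))})
      atTop (nhds 1) := by
  classical
  set J : Finset (Fin p) := Finset.univ.filter fun j => βt j ≠ 0 with hJdef
  set G : (n : ℕ) → Matrix (Fin p) (Fin p) ℝ := fun n => (X n).transpose * X n with hGdef
  -- positive semidefiniteness and invertibility facts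
  have hGpsd : ∀ n, (G n).PosSemidef := by
    intro n
    have := Matrix.posSemidef_conjTranspose_mul_self (X n)
    rwa [Matrix.conjTranspose_eq_transpose_of_trivial] at this
  have hCpsd : C.PosSemidef := psd_limit hGpsd hXC
  have hCJdet : IsUnit (C.submatrix (Subtype.val : {x // x ∈ J} → Fin p) (Subtype.val : {x // x ∈ J} → Fin p)).det :=
    isUnit_det_submatrix hCpsd hC J
  have hGJt : Tendsto (fun n => (G n).submatrix (Subtype.val : {x // x ∈ J} → Fin p) (Subtype.val : {x // x ∈ J} → Fin p))
      atTop (nhds (C.submatrix (Subtype.val : {x // x ∈ J} → Fin p) (Subtype.val : {x // x ∈ J} → Fin p))) := by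
    refine tendsto_pi_nhds.mpr fun a => tendsto_pi_nhds.mpr fun b => ?_
    exact entry_tendsto hXC a.val b.val
  obtain ⟨hGJinv, hGJunit⟩ := tendsto_inv_matrix hGJt hCJdet
  obtain ⟨hGinv, hGunit⟩ := tendsto_inv_matrix hXC hC
  obtain ⟨K₁, hK₁pos, hK₁⟩ := ev_entry_bound hGinv
  -- entries of (XᵀA)(AᵀA)⁻¹ are bounded
  have hB2t : Tendsto (fun n => ((G n).submatrix id (Subtype.val : {x // x ∈ J} → Fin p)) *
        (((G n).submatrix (Subtype.val : {x // x ∈ J} → Fin p) (Subtype.val : {x // x ∈ J} → Fin p))⁻¹)) atTop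
      (nhds ((C.submatrix id (Subtype.val : {x // x ∈ J} → Fin p)) *
        ((C.submatrix (Subtype.val : {x // x ∈ J} → Fin p) (Subtype.val : {x // x ∈ J} → Fin p))⁻¹))) := by
    have hsub : Tendsto (fun n => (G n).submatrix id (Subtype.val : {x // x ∈ J} → Fin p))
        atTop (nhds (C.submatrix id (Subtype.val : {x // x ∈ J} → Fin p))) := by
      refine tendsto_pi_nhds.mpr fun a => tendsto_pi_nhds.mpr fun b => ?_
      exact entry_tendsto hXC a b.val
    have hmul : Continuous fun q : Matrix (Fin p) {x // x ∈ J} ℝ ×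
        Matrix {x // x ∈ J} {x // x ∈ J} ℝ => q.1 * q.2 :=
      Continuous.matrix_mul continuous_fst continuous_snd
    exact (hmul.continuousAt.tendsto).comp (hsub.prodMk_nhds hGJinv)
  obtain ⟨K₂, hK₂pos, hK₂⟩ := ev_entry_bound hB2t
  set M : ℝ := 1 + p * K₂ with hMdef
  have hM1 : 1 ≤ M := by
    have : (0:ℝ) ≤ p * K₂ := by positivity
    linarith
  have hMpos : 0 < M := lt_of_lt_of_le one_pos hM1
  -- the probability event
  obtain ⟨K₀, hK₀pos, hK₀⟩ := ev_entry_bound hXC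
  have hbound : ∀ᶠ n in atTop, ∀ j : Fin p, ∑ i : Fin n, (X n i j) ^ 2 ≤ K₀ := by
    filter_upwards [hK₀] with n hn j
    have : ∑ i : Fin n, (X n i j) ^ 2 = G n j j := by
      simp [hGdef, Matrix.mul_apply, sq]
    rw [this]
    exact le_trans (le_abs_self _) (hn j j)
  have hprob := prob_event hmeas hindep hident hmean hvar X hK₀pos hbound
    (fun n => δ n / M) (hδ_inf.atTop_div_const hMpos)
  -- eventual facts
  have hδpos : ∀ᶠ n in atTop, 0 < δ n := hδ_inf.eventually_gt_atTop 0
  have hn1 : ∀ᶠ n : ℕ in atTop, 1 ≤ n := eventually_ge_atTop 1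
  have hsmall : ∀ᶠ n in atTop, ∀ j ∈ J, p * K₁ * (2 * δ n) < Real.sqrt n * |βt j| := by
    rw [eventually_all_finset]
    intro j hj
    have hbj : 0 < |βt j| := abs_pos.mpr (by simpa [hJdef] using hj)
    set c : ℝ := |βt j| / (2 * p * K₁ + 1) with hcdef
    have hden : (0:ℝ) < 2 * p * K₁ + 1 := by positivity
    have hcpos : 0 < c := div_pos hbj hden
    have hc' : c * (2 * p * K₁ + 1) = |βt j| := div_mul_cancel₀ _ (ne_of_gt hden)
    filter_upwards [isLittleO_iff.mp hδ_o hcpos, hδpos, hn1] with n hle hpos h1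
    have hn0 : (0:ℝ) < (n:ℝ) := by exact_mod_cast Nat.lt_of_lt_of_le Nat.zero_lt_one h1
    have hsn : 0 < Real.sqrt n := Real.sqrt_pos.mpr hn0
    have hle' : δ n ≤ c * Real.sqrt n := by
      have := hle
      rwa [Real.norm_eq_abs, Real.norm_eq_abs, abs_of_pos hpos, abs_of_nonneg
        (Real.sqrt_nonneg _)] at this
    have hK₁0 : (0:ℝ) ≤ 2 * p * K₁ := by positivity
    have h2 : (2 * p * K₁) * c < |βt j| := by nlinarith
    have h3 : (2 * p * K₁) * δ n ≤ (2 * p * K₁) * (c * Real.sqrt n) :=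
      mul_le_mul_of_nonneg_left hle' hK₁0
    have h4 : (2 * p * K₁ * c) * Real.sqrt n < |βt j| * Real.sqrt n :=
      mul_lt_mul_of_pos_right h2 hsn
    have h5 : (p:ℝ) * K₁ * (2 * δ n) = (2 * p * K₁) * δ n := by ring
    rw [h5]
    calc (2 * (p:ℝ) * K₁) * δ n ≤ (2 * p * K₁) * (c * Real.sqrt n) := h3
      _ = (2 * p * K₁ * c) * Real.sqrt n := by ring
      _ < |βt j| * Real.sqrt n := h4
      _ = Real.sqrt n * |βt j| := mul_comm _ _
  -- the deterministic inclusion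
  have hincl : ∀ᶠ n in atTop,
      {ω | ∀ j : Fin p, |∑ i : Fin n, X n i j * ε i ω| ≤ δ n / M} ⊆ {ω |
        IsDDSSol (X n) (fun i => (X n).mulVec (fun j => Real.sqrt n * βt j) i + ε i ω)
          (δ n) (fun j => Real.sqrt n * βt j) ∧
        IsDDSSol (X n) (fun i => (X n).mulVec (fun j => Real.sqrt n * βt j) i + ε i ω)
          (δ n)
          (restrictedLS J (X n)
            (fun i => (X n).mulVec (fun j => Real.sqrt n * βt j) i + ε i ω))} := by
    filter_upwards [hδpos, hn1, hsmall, hGJunit, hGunit, hK₁, hK₂] with n hδp h1 hsm hJu hGu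
      hk1 hk2
    intro ω hω
    set e : Fin n → ℝ := fun i => ε i ω with hedef
    have he : ∀ j, |(X n).transpose.mulVec e j| ≤ δ n / M := by
      intro j
      have hh : (X n).transpose.mulVec e j = ∑ i : Fin n, X n i j * ε i ω := by
        simp [Matrix.mulVec, dotProduct, Matrix.transpose_apply, hedef]
      rw [hh]; exact hω j
    set βs : Fin p → ℝ := fun j => Real.sqrt n * βt j with hβsdef
    set y : Fin n → ℝ := fun i => (X n).mulVec βs i + ε i ω with hydef
    have hy : y - (X n).mulVec βs = e := by
      funext i; simp [hydef, hedef]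
    have hn0 : (0:ℝ) < (n:ℝ) := by exact_mod_cast Nat.lt_of_lt_of_le Nat.zero_lt_one h1
    have hsn : (0:ℝ) < Real.sqrt n := Real.sqrt_pos.mpr hn0
    have hδ0 : 0 ≤ δ n := le_of_lt hδp
    have hcδ : δ n / M ≤ δ n := div_le_self hδ0 hM1
    have hfeas_s : Feas (X n) y (δ n) βs := by
      intro j; rw [hy]; exact le_trans (he j) hcδ
    -- every feasible point has at least J.card nonzero coordinates
    have hmin : ∀ β' : Fin p → ℝ, Feas (X n) y (δ n) β' → J.card ≤ l0 β' := by
      intro β' hfe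
      have hGd : ∀ k, |((G n).mulVec (βs - β')) k| ≤ 2 * δ n := by
        intro k
        have hy' : y - (X n).mulVec β' = (X n).mulVec (βs - β') + e := by
          funext i
          have : ((X n).mulVec (βs - β')) i = ((X n).mulVec βs) i - ((X n).mulVec β') i := by
            rw [Matrix.mulVec_sub]; rfl
          simp only [Pi.sub_apply, Pi.add_apply, hydef, hedef, this]
          ring
        have hsplit : (X n).transpose.mulVec (y - (X n).mulVec β') =
            (G n).mulVec (βs - β') + (X n).transpose.mulVec e := by
          rw [hy', Matrix.mulVec_add, Matrix.mulVec_mulVec]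
        have hA := hfe k
        rw [hsplit] at hA
        have hb : |(X n).transpose.mulVec e k| ≤ δ n := le_trans (he k) hcδ
        have htri : |((G n).mulVec (βs - β')) k| ≤
            |((G n).mulVec (βs - β') + (X n).transpose.mulVec e) k| +
              |(X n).transpose.mulVec e k| := by
          have := abs_sub_abs_le_abs_sub (((G n).mulVec (βs - β') +
            (X n).transpose.mulVec e) k) ((X n).transpose.mulVec e k)
          have h0 : ((G n).mulVec (βs - β') + (X n).transpose.mulVec e) k -
              (X n).transpose.mulVec e k = ((G n).mulVec (βs - β')) k := by
            simp [Pi.add_apply]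
          calc |((G n).mulVec (βs - β')) k|
              = |((G n).mulVec (βs - β') + (X n).transpose.mulVec e) k -
                  (X n).transpose.mulVec e k| := by rw [h0]
            _ ≤ _ := abs_sub _ _
        linarith
      have hdb : ∀ j, |(βs - β') j| ≤ p * K₁ * (2 * δ n) := by
        intro j
        have hrec : βs - β' = ((G n)⁻¹).mulVec ((G n).mulVec (βs - β')) := by
          rw [Matrix.mulVec_mulVec, Matrix.nonsing_inv_mul _ hGu, Matrix.one_mulVec]
        calc |(βs - β') j| = |∑ k, (G n)⁻¹ j k * ((G n).mulVec (βs - β')) k| := by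
              conv_lhs => rw [hrec]
              rfl
          _ ≤ ∑ k, |(G n)⁻¹ j k * ((G n).mulVec (βs - β')) k| :=
              Finset.abs_sum_le_sum_abs _ _
          _ ≤ ∑ _k : Fin p, K₁ * (2 * δ n) := by
              refine Finset.sum_le_sum fun k _ => ?_
              rw [abs_mul]
              exact mul_le_mul (hk1 j k) (hGd k) (abs_nonneg _) (le_of_lt hK₁pos)
          _ = p * (K₁ * (2 * δ n)) := by
              rw [Finset.sum_const, Finset.card_univ, Fintype.card_fin, nsmul_eq_mul]
          _ = p * K₁ * (2 * δ n) := by ring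
      have hsubset : J ⊆ Finset.univ.filter fun j => β' j ≠ 0 := by
        intro j hj
        refine Finset.mem_filter.mpr ⟨Finset.mem_univ _, ?_⟩
        intro h0
        have h1' : |(βs - β') j| = Real.sqrt n * |βt j| := by
          simp only [Pi.sub_apply, h0, sub_zero, hβsdef]
          rw [abs_mul, abs_of_nonneg (Real.sqrt_nonneg _)]
        have := hdb j
        rw [h1'] at this
        linarith [hsm j hj]
      exact Finset.card_le_card hsubset
    have hl0s : l0 βs = J.card := by
      have hfil : (Finset.univ.filter fun j => βs j ≠ 0) = J := by
        ext j
        simp only [Finset.mem_filter, Finset.mem_univ, true_and, hβsdef, hJdef,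
          mul_ne_zero_iff]
        constructor
        · rintro ⟨-, h⟩; exact h
        · intro h; exact ⟨ne_of_gt hsn, h⟩
      show (Finset.univ.filter fun j => βs j ≠ 0).card = J.card
      rw [hfil]
    -- the oracle estimator
    set A : Matrix (Fin n) {x // x ∈ J} ℝ :=
      (X n).submatrix id (Subtype.val : {x // x ∈ J} → Fin p) with hAdef
    have hAtA : A.transpose * A =
        (G n).submatrix (Subtype.val : {x // x ∈ J} → Fin p)
          (Subtype.val : {x // x ∈ J} → Fin p) := by
      ext a b
      simp [hAdef, hGdef, Matrix.mul_apply]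
    have hXtA : (X n).transpose * A =
        (G n).submatrix id (Subtype.val : {x // x ∈ J} → Fin p) := by
      ext a b
      simp [hAdef, hGdef, Matrix.mul_apply]
    have hAu : IsUnit (A.transpose * A).det := by rw [hAtA]; exact hJu
    set u : {x // x ∈ J} → ℝ := fun a => βs a.val with hudef
    have hβs_ext : βs = ext0 J u := by
      funext j
      by_cases h : j ∈ J
      · simp [ext0, h, hudef]
      · have hz : βt j = 0 := by
          by_contra hne
          exact h (by simp [hJdef, hne])
        simp [ext0, h, hβsdef, hz]
    set βo : Fin p → ℝ := restrictedLS J (X n) y with hβodef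
    have hβo_ext : βo = ext0 J ((A.transpose * A)⁻¹.mulVec (A.transpose.mulVec y)) := rfl
    set r : {x // x ∈ J} → ℝ := A.transpose.mulVec e with hrdef
    set q : {x // x ∈ J} → ℝ := (A.transpose * A)⁻¹.mulVec r with hqdef
    have hyvec : y = A.mulVec u + e := by
      funext i
      simp only [Pi.add_apply, hydef, hedef]
      congr 1
      rw [hβs_ext, mulVec_ext0']
    have hq : (A.transpose * A)⁻¹.mulVec (A.transpose.mulVec y) = u + q := by
      rw [hyvec, Matrix.mulVec_add, Matrix.mulVec_mulVec, Matrix.mulVec_add,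
        Matrix.mulVec_mulVec, Matrix.nonsing_inv_mul _ hAu, Matrix.one_mulVec, hqdef, hrdef,
        Matrix.mulVec_mulVec]
    have hXβo : (X n).mulVec βo = A.mulVec u + A.mulVec q := by
      rw [hβo_ext, mulVec_ext0', hq, Matrix.mulVec_add]
    have hres : y - (X n).mulVec βo = e - A.mulVec q := by
      rw [hyvec, hXβo]
      abel
    have hr : ∀ a, |r a| ≤ δ n / M := by
      intro a
      have : r a = (X n).transpose.mulVec e a.val := by
        simp [hrdef, hAdef, Matrix.mulVec, dotProduct, Matrix.transpose_apply]
      rw [this]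
      exact he a.val
    have hfeas_o : Feas (X n) y (δ n) βo := by
      intro j
      rw [hres, Matrix.mulVec_sub, Matrix.mulVec_mulVec, hXtA]
      have hBq : ((G n).submatrix id (Subtype.val : {x // x ∈ J} → Fin p)).mulVec q =
          (((G n).submatrix id (Subtype.val : {x // x ∈ J} → Fin p)) *
            (((G n).submatrix (Subtype.val : {x // x ∈ J} → Fin p)
              (Subtype.val : {x // x ∈ J} → Fin p))⁻¹)).mulVec r := by
        rw [hqdef, hAtA, Matrix.mulVec_mulVec]
      rw [hBq]
      have hone : |((((G n).submatrix id (Subtype.val : {x // x ∈ J} → Fin p)) *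
          (((G n).submatrix (Subtype.val : {x // x ∈ J} → Fin p)
            (Subtype.val : {x // x ∈ J} → Fin p))⁻¹)).mulVec r) j| ≤
          p * (K₂ * (δ n / M)) := by
        calc |_| ≤ ∑ a : {x // x ∈ J}, |(((G n).submatrix id
              (Subtype.val : {x // x ∈ J} → Fin p)) *
              (((G n).submatrix (Subtype.val : {x // x ∈ J} → Fin p)
                (Subtype.val : {x // x ∈ J} → Fin p))⁻¹)) j a * r a| :=
              Finset.abs_sum_le_sum_abs _ _
          _ ≤ ∑ _a : {x // x ∈ J}, K₂ * (δ n / M) := by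
              refine Finset.sum_le_sum fun a _ => ?_
              rw [abs_mul]
              exact mul_le_mul (hk2 j a) (hr a) (abs_nonneg _) (le_of_lt hK₂pos)
          _ = (Fintype.card {x // x ∈ J}) * (K₂ * (δ n / M)) := by
              rw [Finset.sum_const, Finset.card_univ, nsmul_eq_mul]
          _ ≤ p * (K₂ * (δ n / M)) := by
              refine mul_le_mul_of_nonneg_right ?_ (by positivity)
              have : Fintype.card {x // x ∈ J} = J.card := Fintype.card_coe J
              rw [this]
              exact_mod_cast le_trans (Finset.card_le_univ J) (le_of_eq (Fintype.card_fin p))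
      have hfin : |(X n).transpose.mulVec e j -
          ((((G n).submatrix id (Subtype.val : {x // x ∈ J} → Fin p)) *
            (((G n).submatrix (Subtype.val : {x // x ∈ J} → Fin p)
              (Subtype.val : {x // x ∈ J} → Fin p))⁻¹)).mulVec r) j| ≤
          δ n / M + p * (K₂ * (δ n / M)) :=
        le_trans (abs_sub _ _) (add_le_add (he j) hone)
      have hMδ : δ n / M + p * (K₂ * (δ n / M)) = δ n := by
        have hM0 : M ≠ 0 := ne_of_gt hMpos
        rw [hMdef]
        field_simp
      rw [hMδ] at hfin
      simpa [Pi.sub_apply] using hfin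
    have hl0o : l0 βo ≤ J.card := by
      apply Finset.card_le_card
      intro j hj
      rcases Finset.mem_filter.mp hj with ⟨-, hne⟩
      by_contra hnotin
      exact hne (by simp [hβodef, restrictedLS, hnotin])
    exact ⟨⟨hfeas_s, fun β' hfe => hl0s ▸ hmin β' hfe⟩,
      ⟨hfeas_o, fun β' hfe => le_trans hl0o (hmin β' hfe)⟩⟩
  -- final squeeze
  refine tendsto_of_tendsto_of_tendsto_of_le_of_le' hprob tendsto_const_nhds ?_ ?_
  · filter_upwards [hincl] with n hn
    exact measure_mono hn
  · exact Eventually.of_forall fun n => prob_le_one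
end
end

section
/- (Polished estimator equals the Oracle.) Fix p and a vector β̃* ∈ ℝ^p with support J* = { j : β̃*_j ≠ 0 }. For each n, let Xₙ ∈ ℝ^{n×p} be a design matrix, set β*ₙ = n^{1/2} β̃*, and let yₙ = Xₙ β*ₙ + (ε₁,…,εₙ)ᵀ, where ε₁, ε₂, … are i.i.d. real random variables with mean zero and finite variance. Assume XₙᵀXₙ converges to an invertible matrix C as n → ∞, and let δₙ be a sequence with δₙ → ∞ and δₙ = o(n^{1/2}). Then the probability of the event that, for every solution β̂ of the Discrete Dantzig Selector problem with data (Xₙ, yₙ) and parameter δₙ, the polished estimator β̂ᴾ equals the Oracle estimator β̂ᴼ, tends to one as n → ∞. -/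
noncomputable section
open Classical MeasureTheory ProbabilityTheory Filter Asymptotics
open scoped ENNReal

/-- The polished estimator associated with `b`: least squares on the support of `b`. -/
def polished {n p : ℕ} (X : Matrix (Fin n) (Fin p) ℝ) (y : Fin n → ℝ)
    (b : Fin p → ℝ) : Fin p → ℝ :=
  restrictedLS (Finset.univ.filter fun j => b j ≠ 0) X y

lemma det_step {n p : ℕ} (X : Matrix (Fin n) (Fin p) ℝ) (βt : Fin p → ℝ) (δ K : ℝ)
    (hA : IsUnit (X.transpose * X).det)
    (hK : ∀ j k, |(X.transpose * X)⁻¹ j k| ≤ K)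
    (hsep : ∀ j, βt j ≠ 0 → 2 * p * K * δ < Real.sqrt n * |βt j|)
    (e : Fin n → ℝ) (he : ∀ j, |X.transpose.mulVec e j| ≤ δ)
    (βhat : Fin p → ℝ)
    (hsol : IsDDSSol X (fun i => X.mulVec (fun j => Real.sqrt n * βt j) i + e i) δ βhat) :
    (Finset.univ.filter fun j => βhat j ≠ 0) = (Finset.univ.filter fun j => βt j ≠ 0) := by
  set βs : Fin p → ℝ := fun j => Real.sqrt n * βt j with hβs
  set y : Fin n → ℝ := fun i => X.mulVec βs i + e i with hy
  have hyd : y - X.mulVec βs = e := by funext i; simp [hy]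
  -- βs is feasible
  have hfeas : Feas X y δ βs := by
    intro j; rw [hyd]; exact he j
  have hcard : l0 βhat ≤ l0 βt := by
    refine le_trans (hsol.2 βs hfeas) ?_
    apply Finset.card_le_card
    intro j hj
    simp only [Finset.mem_filter, Finset.mem_univ, true_and] at hj ⊢
    intro h; apply hj; simp [hβs, h]
  set A := X.transpose * X with hAdef
  set d : Fin p → ℝ := βs - βhat with hd
  have hAd : ∀ k, |A.mulVec d k| ≤ 2 * δ := by
    intro k
    have h1 : X.transpose.mulVec (y - X.mulVec βhat) k
        = A.mulVec d k + X.transpose.mulVec e k := by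
      have : y - X.mulVec βhat = X.mulVec d + e := by
        funext i
        simp only [hy, hd, Matrix.mulVec_sub, Pi.sub_apply, Pi.add_apply]
        ring
      rw [this, Matrix.mulVec_add, Pi.add_apply, Matrix.mulVec_mulVec]
    have h2 := hsol.1 k
    rw [h1] at h2
    have h3 := he k
    calc |A.mulVec d k| = |(A.mulVec d k + X.transpose.mulVec e k) - X.transpose.mulVec e k| := by
          ring_nf
      _ ≤ |A.mulVec d k + X.transpose.mulVec e k| + |X.transpose.mulVec e k| := abs_sub _ _
      _ ≤ δ + δ := add_le_add h2 h3
      _ = 2 * δ := by ring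
  have hdj : ∀ j, |d j| ≤ 2 * p * K * δ := by
    intro j
    have hinv : A⁻¹.mulVec (A.mulVec d) = d := by
      rw [Matrix.mulVec_mulVec, Matrix.nonsing_inv_mul A hA, Matrix.one_mulVec]
    conv_lhs => rw [← hinv]
    show |∑ k, A⁻¹ j k * A.mulVec d k| ≤ _
    calc |∑ k, A⁻¹ j k * A.mulVec d k| ≤ ∑ k, |A⁻¹ j k * A.mulVec d k| :=
          Finset.abs_sum_le_sum_abs _ _
      _ ≤ ∑ _k : Fin p, K * (2 * δ) := by
          apply Finset.sum_le_sum
          intro k _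
          rw [abs_mul]
          exact mul_le_mul (hK j k) (hAd k) (abs_nonneg _) (le_trans (abs_nonneg _) (hK j k))
      _ = 2 * p * K * δ := by
          rw [Finset.sum_const, Finset.card_univ, Fintype.card_fin, nsmul_eq_mul]
          ring
  have hsub : (Finset.univ.filter fun j => βt j ≠ 0) ⊆
      (Finset.univ.filter fun j => βhat j ≠ 0) := by
    intro j hj
    simp only [Finset.mem_filter, Finset.mem_univ, true_and] at hj ⊢
    intro h0
    have habs : |d j| = Real.sqrt n * |βt j| := by
      simp [hd, hβs, h0, abs_mul, abs_of_nonneg (Real.sqrt_nonneg _)]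
    have h5 := hdj j
    rw [habs] at h5
    exact absurd h5 (not_le.2 (hsep j hj))
  exact (Finset.eq_of_subset_of_card_le hsub hcard).symm

section Prob
variable {Ω : Type*} [MeasurableSpace Ω] (P : Measure Ω) [IsProbabilityMeasure P]
  (ε : ℕ → Ω → ℝ)

omit [IsProbabilityMeasure P] in
lemma memL2 (hmeas : ∀ i, Measurable (ε i))
    (hident : ∀ i, Measure.map (ε i) P = Measure.map (ε 0) P)
    (hvar : MemLp (ε 0) 2 P) (i : ℕ) : MemLp (ε i) 2 P := by
  have h0 : MemLp (id : ℝ → ℝ) 2 (Measure.map (ε 0) P) :=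
    (memLp_map_measure_iff aestronglyMeasurable_id (hmeas 0).aemeasurable).2 hvar
  rw [← hident i] at h0
  exact (memLp_map_measure_iff aestronglyMeasurable_id (hmeas i).aemeasurable).1 h0

omit [IsProbabilityMeasure P] in
lemma mean_i (hmeas : ∀ i, Measurable (ε i))
    (hident : ∀ i, Measure.map (ε i) P = Measure.map (ε 0) P)
    (hmean : ∫ ω, ε 0 ω ∂P = 0) (i : ℕ) : ∫ ω, ε i ω ∂P = 0 := by
  have h1 : ∫ ω, ε i ω ∂P = ∫ x, x ∂(Measure.map (ε i) P) :=
    (integral_map (hmeas i).aemeasurable aestronglyMeasurable_id).symm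
  have h2 : ∫ ω, ε 0 ω ∂P = ∫ x, x ∂(Measure.map (ε 0) P) :=
    (integral_map (hmeas 0).aemeasurable aestronglyMeasurable_id).symm
  rw [h1, hident i, ← h2, hmean]

lemma var_i (hmeas : ∀ i, Measurable (ε i))
    (hident : ∀ i, Measure.map (ε i) P = Measure.map (ε 0) P)
    (hvar : MemLp (ε 0) 2 P) (i : ℕ) : variance (ε i) P = variance (ε 0) P := by
  have hsq : ∀ k : ℕ, ∫ ω, (ε k ω) ^ 2 ∂P = ∫ x, x ^ 2 ∂(Measure.map (ε k) P) := fun k =>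
    (integral_map (hmeas k).aemeasurable
      (aestronglyMeasurable_id.pow 2)).symm
  have hm : ∀ k : ℕ, ∫ ω, ε k ω ∂P = ∫ x, x ∂(Measure.map (ε k) P) := fun k =>
    (integral_map (hmeas k).aemeasurable aestronglyMeasurable_id).symm
  rw [variance_eq_sub (memL2 P ε hmeas hident hvar i), variance_eq_sub hvar]
  have e1 : ∫ ω, (ε i ^ 2) ω ∂P = ∫ ω, (ε 0 ^ 2) ω ∂P := by
    simp only [Pi.pow_apply]
    rw [hsq i, hident i, ← hsq 0]
  have e2 : ∫ ω, ε i ω ∂P = ∫ ω, ε 0 ω ∂P := by rw [hm i, hident i, ← hm 0]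
  rw [e1, e2]

lemma cheb (hmeas : ∀ i, Measurable (ε i))
    (hindep : iIndepFun ε P)
    (hident : ∀ i, Measure.map (ε i) P = Measure.map (ε 0) P)
    (hmean : ∫ ω, ε 0 ω ∂P = 0)
    (hvar : MemLp (ε 0) 2 P)
    {n : ℕ} (a : Fin n → ℝ) {c : ℝ} (hc : 0 < c) :
    P {ω | c < |∑ i : Fin n, a i * ε i ω|} ≤
      ENNReal.ofReal ((∑ i : Fin n, (a i) ^ 2) * variance (ε 0) P / c ^ 2) := by
  set S : Ω → ℝ := ∑ i : Fin n, fun ω => a i * ε i ω with hS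
  have hSω : ∀ ω, S ω = ∑ i : Fin n, a i * ε i ω := by
    intro ω; rw [hS, Finset.sum_apply]
  have hL2 : ∀ i : Fin n, MemLp (fun ω => a i * ε i ω) 2 P := fun i =>
    (memL2 P ε hmeas hident hvar i).const_mul (a i)
  have hSL2 : MemLp S 2 P := memLp_finset_sum' _ (fun i _ => hL2 i)
  have hmeanS : ∫ ω, S ω ∂P = 0 := by
    simp only [hSω]
    rw [integral_finset_sum (f := fun (i : Fin n) ω => a i * ε i ω) Finset.univ
      (fun i _ => ((memL2 P ε hmeas hident hvar i).integrable one_le_two).const_mul _)]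
    simp [integral_const_mul, mean_i P ε hmeas hident hmean]
  have hvarS : variance S P = (∑ i : Fin n, (a i) ^ 2) * variance (ε 0) P := by
    rw [hS, IndepFun.variance_sum (fun i _ => hL2 i) ?_]
    · rw [Finset.sum_mul]
      congr 1; funext i
      rw [variance_const_mul, var_i P ε hmeas hident hvar]
    · intro i _ j _ hij
      exact (hindep.indepFun (Fin.val_injective.ne hij)).comp
        (measurable_id.const_mul (a i)) (measurable_id.const_mul (a j))
  have hcheb := meas_ge_le_variance_div_sq hSL2 hc
  rw [hvarS] at hcheb
  refine le_trans (measure_mono ?_) hcheb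
  intro ω hω
  simp only [Set.mem_setOf_eq] at hω ⊢
  rw [show ∫ x, S x ∂P = 0 from hmeanS, sub_zero, hSω]
  exact le_of_lt hω

end Prob

/-- Fixed-`p` asymptotics: with probability tending to one, for every
Discrete Dantzig Selector solution `β̂`, the polished estimator `β̂ᴾ` coincides with the
Oracle estimator `β̂ᴼ` (least squares on `J* = supp β̃*`). -/
theorem stmt12 {Ω : Type*} [MeasurableSpace Ω] (P : Measure Ω) [IsProbabilityMeasure P]
    {p : ℕ} (βt : Fin p → ℝ)
    (X : (n : ℕ) → Matrix (Fin n) (Fin p) ℝ)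
    (ε : ℕ → Ω → ℝ) (hmeas : ∀ i, Measurable (ε i))
    (hindep : iIndepFun ε P)
    (hident : ∀ i, Measure.map (ε i) P = Measure.map (ε 0) P)
    (hint : Integrable (ε 0) P) (hmean : ∫ ω, ε 0 ω ∂P = 0)
    (hvar : MemLp (ε 0) 2 P)
    (C : Matrix (Fin p) (Fin p) ℝ) (hC : IsUnit C.det)
    (hXC : Tendsto (fun n => (X n).transpose * (X n)) atTop (nhds C))
    (δ : ℕ → ℝ) (hδ_inf : Tendsto δ atTop atTop)
    (hδ_o : δ =o[atTop] fun n : ℕ => Real.sqrt n) :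
    Tendsto (fun n => P {ω | ∀ βhat : Fin p → ℝ,
        IsDDSSol (X n) (fun i => (X n).mulVec (fun j => Real.sqrt n * βt j) i + ε i ω)
          (δ n) βhat →
        polished (X n) (fun i => (X n).mulVec (fun j => Real.sqrt n * βt j) i + ε i ω)
            βhat =
          restrictedLS (Finset.univ.filter fun j => βt j ≠ 0) (X n)
            (fun i => (X n).mulVec (fun j => Real.sqrt n * βt j) i + ε i ω)})
      atTop (nhds 1) := by
  set A : ℕ → Matrix (Fin p) (Fin p) ℝ := fun n => (X n).transpose * (X n) with hAdef
  set V : ℝ := variance (ε 0) P with hV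
  -- basic facts
  have hCdet : C.det ≠ 0 := by
    simpa [isUnit_iff_ne_zero] using hC
  have hdet : Tendsto (fun n => (A n).det) atTop (nhds C.det) :=
    (continuous_id.matrix_det.tendsto C).comp hXC
  have hAunit : ∀ᶠ n in atTop, IsUnit (A n).det := by
    filter_upwards [hdet.eventually_ne hCdet] with n hn
    exact isUnit_iff_ne_zero.2 hn
  have hRinv : ContinuousAt Ring.inverse C.det := by
    rw [Ring.inverse_eq_inv']
    exact continuousAt_inv₀ hCdet
  have hBinv : Tendsto (fun n => (A n)⁻¹) atTop (nhds C⁻¹) :=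
    ((continuousAt_matrix_inv C hRinv).tendsto).comp hXC
  set K : ℝ := 1 + ∑ j : Fin p, ∑ k : Fin p, |C⁻¹ j k| with hKdef
  have hK0 : 0 < K := by
    have : (0:ℝ) ≤ ∑ j : Fin p, ∑ k : Fin p, |C⁻¹ j k| :=
      Finset.sum_nonneg fun j _ => Finset.sum_nonneg fun k _ => abs_nonneg _
    rw [hKdef]; linarith
  have hKev : ∀ᶠ n in atTop, ∀ j k : Fin p, |(A n)⁻¹ j k| ≤ K := by
    rw [eventually_all]
    intro j
    rw [eventually_all]
    intro k
    have hjk : Tendsto (fun n => |(A n)⁻¹ j k|) atTop (nhds (|C⁻¹ j k|)) := by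
      have hcont : Continuous (fun M : Matrix (Fin p) (Fin p) ℝ => M j k) :=
        (continuous_apply k).comp (continuous_apply j)
      have h1 : Tendsto (fun n => (A n)⁻¹ j k) atTop (nhds (C⁻¹ j k)) :=
        (hcont.tendsto C⁻¹).comp hBinv
      exact (continuous_abs.tendsto _).comp h1
    have hlt : |C⁻¹ j k| < K := by
      have h2 : |C⁻¹ j k| ≤ ∑ j' : Fin p, ∑ k' : Fin p, |C⁻¹ j' k'| := by
        calc |C⁻¹ j k| ≤ ∑ k' : Fin p, |C⁻¹ j k'| :=
              Finset.single_le_sum (f := fun k' => |C⁻¹ j k'|)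
                (fun k' _ => abs_nonneg _) (Finset.mem_univ k)
          _ ≤ ∑ j' : Fin p, ∑ k' : Fin p, |C⁻¹ j' k'| :=
              Finset.single_le_sum (f := fun j' => ∑ k' : Fin p, |C⁻¹ j' k'|)
                (fun j' _ => Finset.sum_nonneg fun k' _ => abs_nonneg _) (Finset.mem_univ j)
      rw [hKdef]; linarith
    exact hjk.eventually_le_const hlt
  have hδpos : ∀ᶠ n in atTop, 0 < δ n := hδ_inf.eventually_gt_atTop 0
  -- separation eventually
  have hsep_ev : ∀ᶠ n in atTop, ∀ j, βt j ≠ 0 →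
      2 * p * K * δ n < Real.sqrt n * |βt j| := by
    rw [eventually_all]
    intro j
    by_cases hj : βt j = 0
    · filter_upwards with n hn; exact absurd hj hn
    · set M : ℝ := 2 * p * K with hM
      have hM0 : 0 ≤ M := by positivity
      have hcpos : 0 < |βt j| / (2 * (M + 1)) := by positivity
      filter_upwards [hδ_o.def hcpos, eventually_ge_atTop 1] with n hn hn1 _
      have hsq : 0 < Real.sqrt n := Real.sqrt_pos.2 (by exact_mod_cast Nat.lt_of_lt_of_le zero_lt_one hn1)
      have h1 : M * δ n ≤ M * |δ n| := by
        apply mul_le_mul_of_nonneg_left (le_abs_self _) hM0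
      have h2 : ‖δ n‖ ≤ |βt j| / (2 * (M + 1)) * Real.sqrt n := by
        simpa [Real.norm_eq_abs, abs_of_nonneg (Real.sqrt_nonneg _)] using hn
      have h3 : M * |δ n| ≤ M * (|βt j| / (2 * (M + 1)) * Real.sqrt n) :=
        mul_le_mul_of_nonneg_left (by simpa [Real.norm_eq_abs] using h2) hM0
      have h4 : M * (|βt j| / (2 * (M + 1)) * Real.sqrt n) < Real.sqrt n * |βt j| := by
        have hbj : 0 < |βt j| := abs_pos.2 hj
        have key : M * (|βt j| / (2 * (M + 1)) * Real.sqrt n)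
            = M / (2 * (M + 1)) * (Real.sqrt n * |βt j|) := by ring
        have h5 : M / (2 * (M + 1)) < 1 := by
          rw [div_lt_one (by linarith)]; linarith
        rw [key]
        calc M / (2 * (M + 1)) * (Real.sqrt n * |βt j|)
            < 1 * (Real.sqrt n * |βt j|) :=
              mul_lt_mul_of_pos_right h5 (by positivity)
          _ = Real.sqrt n * |βt j| := one_mul _
      calc M * δ n ≤ M * |δ n| := h1
        _ ≤ _ := h3
        _ < _ := h4
  -- the bad sets and their probability
  set bad : ℕ → Set Ω := fun n =>
    ⋃ j : Fin p, {ω | δ n < |∑ i : Fin n, X n i j * ε i ω|} with hbaddef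
  have hbadmeas : ∀ n, MeasurableSet (bad n) := by
    intro n
    apply MeasurableSet.iUnion
    intro j
    have hSm : Measurable fun ω => ∑ i : Fin n, X n i j * ε i ω :=
      Finset.measurable_sum _ fun i _ => (hmeas i).const_mul _
    exact measurableSet_lt measurable_const hSm.abs
  have hAjj : ∀ n (j : Fin p), A n j j = ∑ i : Fin n, (X n i j) ^ 2 := by
    intro n j
    rw [hAdef]
    simp [Matrix.mul_apply, Matrix.transpose_apply, sq]
  have hbad0 : Tendsto (fun n => P (bad n)) atTop (nhds 0) := by
    have hg : Tendsto (fun n => ∑ j : Fin p,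
        ENNReal.ofReal (A n j j * V / (δ n) ^ 2)) atTop (nhds 0) := by
      have hterm : ∀ j : Fin p, Tendsto (fun n => ENNReal.ofReal (A n j j * V / (δ n) ^ 2))
          atTop (nhds 0) := by
        intro j
        have hcont : Continuous (fun M : Matrix (Fin p) (Fin p) ℝ => M j j) :=
          (continuous_apply j).comp (continuous_apply j)
        have hAjjt : Tendsto (fun n => A n j j) atTop (nhds (C j j)) :=
          (hcont.tendsto C).comp hXC
        have hδ2 : Tendsto (fun n => ((δ n) ^ 2)⁻¹) atTop (nhds 0) := by
          apply tendsto_inv_atTop_zero.comp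
          have := hδ_inf.atTop_mul_atTop₀ hδ_inf
          simpa [sq] using this
        have hr : Tendsto (fun n => A n j j * V / (δ n) ^ 2) atTop (nhds 0) := by
          have := (hAjjt.mul_const V).mul hδ2
          simpa [div_eq_mul_inv] using this
        have := (ENNReal.continuous_ofReal.tendsto 0).comp hr
        simpa [Function.comp_def] using this
      have := tendsto_finset_sum (Finset.univ : Finset (Fin p))
        (fun j _ => hterm j)
      simpa using this
    apply tendsto_of_tendsto_of_tendsto_of_le_of_le'
      (tendsto_const_nhds : Tendsto (fun _ : ℕ => (0:ℝ≥0∞)) atTop (nhds 0)) hg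
    · filter_upwards with n; simp
    · filter_upwards [hδpos] with n hn
      calc P (bad n) ≤ ∑ j : Fin p, P {ω | δ n < |∑ i : Fin n, X n i j * ε i ω|} := by
            have heq : bad n = ⋃ j ∈ (Finset.univ : Finset (Fin p)),
                {ω | δ n < |∑ i : Fin n, X n i j * ε i ω|} := by
              simp [hbaddef]
            rw [heq]
            exact measure_biUnion_finset_le _ _
        _ ≤ ∑ j : Fin p, ENNReal.ofReal (A n j j * V / (δ n) ^ 2) := by
            apply Finset.sum_le_sum
            intro j _
            have := cheb P ε hmeas hindep hident hmean hvar (fun i => X n i j) hn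
            rw [hAjj n j]
            exact this
  -- the good event implies the target event
  have hmv : ∀ n (v : Fin n → ℝ) (j : Fin p),
      (X n).transpose.mulVec v j = ∑ i : Fin n, X n i j * v i := by
    intro n v j
    simp [Matrix.mulVec, dotProduct, Matrix.transpose_apply]
  have hincl : ∀ᶠ n in atTop, (bad n)ᶜ ⊆ {ω | ∀ βhat : Fin p → ℝ,
      IsDDSSol (X n) (fun i => (X n).mulVec (fun j => Real.sqrt n * βt j) i + ε i ω)
        (δ n) βhat →
      polished (X n) (fun i => (X n).mulVec (fun j => Real.sqrt n * βt j) i + ε i ω)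
          βhat =
        restrictedLS (Finset.univ.filter fun j => βt j ≠ 0) (X n)
          (fun i => (X n).mulVec (fun j => Real.sqrt n * βt j) i + ε i ω)} := by
    filter_upwards [hAunit, hKev, hsep_ev] with n hun hKn hsepn
    intro ω hω βhat hsol
    have he : ∀ j, |(X n).transpose.mulVec (fun i => ε i ω) j| ≤ δ n := by
      intro j
      rw [hmv]
      by_contra hcon
      apply hω
      rw [hbaddef]
      exact Set.mem_iUnion.2 ⟨j, not_le.1 hcon⟩
    have := det_step (X n) βt (δ n) K hun hKn hsepn (fun i => ε i ω) he βhat hsol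
    show polished _ _ _ = _
    rw [polished, this]
  -- conclusion
  have hlow : ∀ᶠ n in atTop, 1 - P (bad n) ≤ P {ω | ∀ βhat : Fin p → ℝ,
      IsDDSSol (X n) (fun i => (X n).mulVec (fun j => Real.sqrt n * βt j) i + ε i ω)
        (δ n) βhat →
      polished (X n) (fun i => (X n).mulVec (fun j => Real.sqrt n * βt j) i + ε i ω)
          βhat =
        restrictedLS (Finset.univ.filter fun j => βt j ≠ 0) (X n)
          (fun i => (X n).mulVec (fun j => Real.sqrt n * βt j) i + ε i ω)} := by
    filter_upwards [hincl] with n hn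
    calc 1 - P (bad n) = P ((bad n)ᶜ) := (prob_compl_eq_one_sub (hbadmeas n)).symm
      _ ≤ _ := measure_mono hn
  have hlowt : Tendsto (fun n => 1 - P (bad n)) atTop (nhds 1) := by
    have := ENNReal.Tendsto.sub
      (tendsto_const_nhds : Tendsto (fun _ : ℕ => (1:ℝ≥0∞)) atTop (nhds 1)) hbad0
      (Or.inl ENNReal.one_ne_top)
    simpa using this
  apply tendsto_of_tendsto_of_tendsto_of_le_of_le' hlowt
    (tendsto_const_nhds : Tendsto (fun _ : ℕ => (1:ℝ≥0∞)) atTop (nhds 1)) hlow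
  filter_upwards with n
  exact prob_le_one
end
end

section
/- (Finite-time convergence rate of sequential linear optimization.) Fix γ > 0 and a function ρ_γ satisfying Assumption (A), and let X ∈ ℝ^{n×p}, y ∈ ℝⁿ, δ ≥ 0 with nonempty feasible set F = { β ∈ ℝ^p : ‖Xᵀ(y − Xβ)‖∞ ≤ δ }. Define h(β) = Σᵢ ρ_γ(|βᵢ|), let β¹ ∈ F, and for k ≥ 1 let β^{k+1} be any minimizer over β ∈ F of Σᵢ ρ'_γ(|β^k_i|)·|βᵢ|. Let ĥ be the limit of the nonincreasing sequence h(β^k). Then for every positive integer K: min_{1 ≤ k ≤ K} ( −Δ(β^k) ) ≤ ( h(β¹) − ĥ ) / K, where Δ(θ) = min over β ∈ F of Σᵢ ρ'_γ(|θᵢ|)·(|βᵢ| − |θᵢ|). -/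
noncomputable section
open Classical
open scoped ENNReal NNReal

/-- The objective `h(β) = Σᵢ ρ(|βᵢ|)`. -/
def hObj {p : ℕ} (ρ : ℝ → ℝ) (β : Fin p → ℝ) : ℝ := ∑ i, ρ |β i|

/-- The weighted ℓ₁-type surrogate objective `Σᵢ ρ'(|θᵢ|)·|βᵢ|`, with extended-real
weights so that the convention `ρ'(0) = ∞` is meaningful (`∞ · 0 = 0`). -/
def surr {p : ℕ} (ρ' : ℝ → ℝ≥0∞) (θ β : Fin p → ℝ) : ℝ≥0∞ :=
  ∑ i, ρ' |θ i| * ENNReal.ofReal |β i|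

/-- `Δ(θ) = min over feasible β of Σᵢ ρ'(|θᵢ|)·(|βᵢ| − |θᵢ|)`, as an extended real. -/
def Delta {n p : ℕ} (X : Matrix (Fin n) (Fin p) ℝ) (y : Fin n → ℝ) (δ : ℝ)
    (ρ' : ℝ → ℝ≥0∞) (θ : Fin p → ℝ) : EReal :=
  sInf {s : EReal | ∃ β : Fin p → ℝ, Feas X y δ β ∧
    s = ∑ i, (ρ' |θ i| : EReal) * ((|β i| - |θ i| : ℝ) : EReal)}

lemma myCoe (x : ℝ≥0∞) (hx : x ≠ ⊤) : (x : EReal) = ((x.toReal : ℝ) : EReal) := by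
  lift x to ℝ≥0 using hx; rfl

lemma ennSum {p : ℕ} (f : Fin p → ℝ≥0∞) : ((∑ i, f i : ℝ≥0∞) : EReal) = ∑ i, ((f i) : EReal) :=
  map_sum (⟨⟨(↑), EReal.coe_ennreal_zero⟩, fun _ _ => EReal.coe_ennreal_add _ _⟩ :
    ℝ≥0∞ →+ EReal) f Finset.univ

lemma realSum {p : ℕ} (f : Fin p → ℝ) : ((∑ i, f i : ℝ) : EReal) = ∑ i, ((f i) : EReal) :=
  map_sum (⟨⟨(↑), EReal.coe_zero⟩, fun _ _ => EReal.coe_add _ _⟩ : ℝ →+ EReal) f Finset.univ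

lemma termEq (w : ℝ≥0∞) (a c : ℝ) (ha : 0 ≤ a) (hc : 0 ≤ c) (htop : w = ⊤ → c = 0) :
    (w : EReal) * ((a - c : ℝ) : EReal)
      = ((w * ENNReal.ofReal a : ℝ≥0∞) : EReal) + ((-(w.toReal * c) : ℝ) : EReal) := by
  by_cases hw : w = ⊤
  · subst hw
    have hc0 : c = 0 := htop rfl
    subst hc0
    rcases eq_or_lt_of_le ha with h0 | h0
    · simp [← h0]
    · rw [EReal.coe_ennreal_top, sub_zero, EReal.top_mul_of_pos (by exact_mod_cast h0)]
      rw [ENNReal.top_mul (by simpa [ENNReal.ofReal_eq_zero] using h0), EReal.coe_ennreal_top]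
      simp
  · have h1 : w * ENNReal.ofReal a ≠ ⊤ := ENNReal.mul_ne_top hw ENNReal.ofReal_ne_top
    rw [myCoe _ hw, myCoe _ h1, ENNReal.toReal_mul, ENNReal.toReal_ofReal ha,
      ← EReal.coe_mul, ← EReal.coe_add, mul_sub]
    ring_nf

lemma sumEq {p : ℕ} (ρ' : ℝ → ℝ≥0∞) (θ β : Fin p → ℝ)
    (htop : ∀ i, ρ' |θ i| = ⊤ → |θ i| = 0) :
    (∑ i, (ρ' |θ i| : EReal) * ((|β i| - |θ i| : ℝ) : EReal))
      = ((surr ρ' θ β : ℝ≥0∞) : EReal)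
        + (((-∑ i, (ρ' |θ i|).toReal * |θ i|) : ℝ) : EReal) := by
  rw [surr, ennSum]
  have : (((-∑ i, (ρ' |θ i|).toReal * |θ i|) : ℝ) : EReal)
      = ∑ i, (((-((ρ' |θ i|).toReal * |θ i|)) : ℝ) : EReal) := by
    rw [← Finset.sum_neg_distrib, realSum]
  rw [this, ← Finset.sum_add_distrib]
  exact Finset.sum_congr rfl fun i _ =>
    termEq _ _ _ (abs_nonneg _) (abs_nonneg _) (htop i)

lemma tangentR {ρ : ℝ → ℝ} {d s t : ℝ} (hconc : ConcaveOn ℝ (Set.Ioi (0:ℝ)) ρ)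
    (ht : 0 < t) (hs : 0 < s) (hd : HasDerivAt ρ d t) : ρ s - ρ t ≤ d * (s - t) := by
  rcases lt_trichotomy s t with h | h | h
  · have := hconc.le_slope_of_hasDerivAt hs ht h hd
    rw [slope_def_field] at this
    have h' : 0 < t - s := by linarith
    rw [le_div_iff₀ h'] at this
    · nlinarith
  · simp [h]
  · have := hconc.slope_le_of_hasDerivAt ht hs h hd
    rw [slope_def_field] at this
    have h' : 0 < s - t := by linarith
    rw [div_le_iff₀ h'] at this
    · nlinarith

lemma tangentE {ρ : ℝ → ℝ} {ρ' : ℝ → ℝ≥0∞}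
    (hcont : Continuous ρ) (hzero : ρ 0 = 0)
    (hconc : ConcaveOn ℝ (Set.Ioi (0:ℝ)) ρ)
    (hderiv : ∀ t : ℝ, 0 < t → ρ' t ≠ ⊤ ∧ HasDerivAt ρ (ρ' t).toReal t)
    (hzeroconv : Filter.Tendsto ρ' (nhdsWithin 0 (Set.Ioi 0)) (nhds (ρ' 0)))
    (s t : ℝ) (hs : 0 ≤ s) (ht : 0 ≤ t) :
    ((ρ s - ρ t : ℝ) : EReal) ≤ (ρ' t : EReal) * ((s - t : ℝ) : EReal) := by
  rcases eq_or_lt_of_le ht with ht0 | htpos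
  · -- t = 0
    rw [← ht0, hzero, sub_zero, sub_zero]
    rcases eq_or_lt_of_le hs with hs0 | hspos
    · rw [← hs0, hzero]; simp
    · by_cases hw : ρ' 0 = ⊤
      · rw [hw, EReal.coe_ennreal_top, EReal.top_mul_of_pos (by exact_mod_cast hspos)]
        exact le_top
      · rw [myCoe _ hw, ← EReal.coe_mul, EReal.coe_le_coe_iff]
        -- real: ρ s ≤ (ρ' 0).toReal * s, via limit u → 0+
        have hne : (nhdsWithin (0:ℝ) (Set.Ioi 0)).NeBot := nhdsGT_neBot 0
        have hc0 : Filter.Tendsto ρ (nhdsWithin (0:ℝ) (Set.Ioi 0)) (nhds (ρ 0)) :=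
          (hcont.tendsto 0).mono_left nhdsWithin_le_nhds
        have h1 : Filter.Tendsto (fun u => ρ s - ρ u) (nhdsWithin 0 (Set.Ioi 0))
            (nhds (ρ s)) := by
          simpa [hzero] using (tendsto_const_nhds.sub hc0)
        have h2 : Filter.Tendsto (fun u => (ρ' u).toReal * (s - u))
            (nhdsWithin 0 (Set.Ioi 0)) (nhds ((ρ' 0).toReal * s)) := by
          have ha : Filter.Tendsto (fun u => (ρ' u).toReal) (nhdsWithin 0 (Set.Ioi 0))
              (nhds ((ρ' 0).toReal)) := (ENNReal.tendsto_toReal hw).comp hzeroconv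
          have hb : Filter.Tendsto (fun u : ℝ => s - u) (nhdsWithin 0 (Set.Ioi 0))
              (nhds (s - 0)) :=
            (tendsto_const_nhds.sub Filter.tendsto_id).mono_left nhdsWithin_le_nhds
          simpa using ha.mul hb
        refine le_of_tendsto_of_tendsto h1 h2 ?_
        filter_upwards [eventually_mem_nhdsWithin] with u hu
        exact tangentR hconc hu hspos (hderiv u hu).2
  · -- t > 0
    obtain ⟨hwne, hd⟩ := hderiv t htpos
    rw [myCoe _ hwne, ← EReal.coe_mul, EReal.coe_le_coe_iff]
    rcases eq_or_lt_of_le hs with hs0 | hspos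
    · -- s = 0 : limit of tangentR as u → 0+
      subst hs0
      have hne : (nhdsWithin (0:ℝ) (Set.Ioi 0)).NeBot := nhdsGT_neBot 0
      have hc0 : Filter.Tendsto ρ (nhdsWithin (0:ℝ) (Set.Ioi 0)) (nhds (ρ 0)) :=
        (hcont.tendsto 0).mono_left nhdsWithin_le_nhds
      have h1 : Filter.Tendsto (fun u => ρ u - ρ t) (nhdsWithin 0 (Set.Ioi 0))
          (nhds (ρ 0 - ρ t)) := hc0.sub tendsto_const_nhds
      have h2 : Filter.Tendsto (fun u : ℝ => (ρ' t).toReal * (u - t))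
          (nhdsWithin 0 (Set.Ioi 0)) (nhds ((ρ' t).toReal * (0 - t))) :=
        (tendsto_const_nhds.mul ((Filter.tendsto_id.sub tendsto_const_nhds))).mono_left
          nhdsWithin_le_nhds
      refine le_of_tendsto_of_tendsto h1 h2 ?_
      filter_upwards [eventually_mem_nhdsWithin] with u hu
      exact tangentR hconc htpos hu hd
    · exact tangentR hconc htpos hspos hd

/-- Finite-time convergence rate of the sequential linear optimization
scheme: if `ĥ` is the limit of the nonincreasing sequence `h(β^k)`, then for every `K ≥ 1`,
`min_{1 ≤ k ≤ K} (−Δ(β^k)) ≤ (h(β¹) − ĥ)/K`. -/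
theorem stmt14 {n p : ℕ} (X : Matrix (Fin n) (Fin p) ℝ) (y : Fin n → ℝ)
    (δ : ℝ) (hδ : 0 ≤ δ)
    (ρ : ℝ → ℝ) (ρ' : ℝ → ℝ≥0∞)
    (hsym : ∀ t : ℝ, ρ (-t) = ρ t)
    (hcont : Continuous ρ)
    (hnonneg : ∀ t : ℝ, 0 ≤ ρ t)
    (hzero : ρ 0 = 0)
    (hconc : ConcaveOn ℝ (Set.Ioi (0 : ℝ)) ρ)
    (hderiv : ∀ t : ℝ, 0 < t → ρ' t ≠ ⊤ ∧ HasDerivAt ρ (ρ' t).toReal t)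
    (hzeroconv : Filter.Tendsto ρ' (nhdsWithin 0 (Set.Ioi 0)) (nhds (ρ' 0)))
    (B : ℕ → Fin p → ℝ)
    (hB1 : Feas X y δ (B 1))
    (hstep : ∀ k : ℕ, 1 ≤ k →
      Feas X y δ (B (k + 1)) ∧
      ∀ β : Fin p → ℝ, Feas X y δ β → surr ρ' (B k) (B (k + 1)) ≤ surr ρ' (B k) β)
    (hhat : ℝ)
    (hlim : Filter.Tendsto (fun k => hObj ρ (B k)) Filter.atTop (nhds hhat)) :
    ∀ K : ℕ, (hK : 1 ≤ K) →
      (Finset.Icc 1 K).inf' (Finset.nonempty_Icc.mpr hK)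
          (fun k => -(Delta X y δ ρ' (B k))) ≤
        (((hObj ρ (B 1) - hhat) / (K : ℝ) : ℝ) : EReal) := by
  -- all iterates are feasible
  have hfeas : ∀ k : ℕ, 1 ≤ k → Feas X y δ (B k) := by
    intro k hk
    induction k with
    | zero => omega
    | succ m ih =>
      rcases Nat.eq_or_lt_of_le hk with h | h
      · simpa [← h] using hB1
      · exact (hstep m (by omega)).1
  set f : ℕ → ℝ := fun k => hObj ρ (B k) with hf
  set d : ℕ → ℝ := fun k => f k - f (k + 1) with hd
  have htopθ : ∀ θ : Fin p → ℝ, ∀ i, ρ' |θ i| = ⊤ → |θ i| = 0 := by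
    intro θ i h
    by_contra hne
    exact (hderiv _ (lt_of_le_of_ne (abs_nonneg _) (Ne.symm hne))).1 h
  -- key per-step estimates
  have key : ∀ k : ℕ, 1 ≤ k →
      ((f (k+1) - f k : ℝ) : EReal) ≤ Delta X y δ ρ' (B k) ∧
      Delta X y δ ρ' (B k) ≤ 0 := by
    intro k hk
    set θ := B k with hθ
    set b := B (k + 1) with hb
    constructor
    · -- lower bound on the defining set
      refine le_sInf ?_
      rintro s ⟨β, hβfeas, rfl⟩
      have hdec := sumEq ρ' θ β (htopθ θ)
      have hdecb := sumEq ρ' θ b (htopθ θ)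
      have hmono : (∑ i, (ρ' |θ i| : EReal) * ((|b i| - |θ i| : ℝ) : EReal))
          ≤ ∑ i, (ρ' |θ i| : EReal) * ((|β i| - |θ i| : ℝ) : EReal) := by
        rw [hdec, hdecb]
        exact add_le_add
          (EReal.coe_ennreal_le_coe_ennreal_iff.2 ((hstep k hk).2 β hβfeas)) le_rfl
      refine le_trans ?_ hmono
      calc ((f (k+1) - f k : ℝ) : EReal)
          = ∑ i, ((ρ |b i| - ρ |θ i| : ℝ) : EReal) := by
            rw [← realSum]
            congr 1
            simp [hf, hObj, Finset.sum_sub_distrib]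
            rfl
        _ ≤ ∑ i, (ρ' |θ i| : EReal) * ((|b i| - |θ i| : ℝ) : EReal) :=
            Finset.sum_le_sum fun i _ =>
              tangentE hcont hzero hconc hderiv hzeroconv _ _ (abs_nonneg _) (abs_nonneg _)
    · -- Delta ≤ 0 by taking β = θ
      refine sInf_le ?_
      exact ⟨θ, hfeas k hk, by simp⟩
  -- monotonicity of f on k ≥ 1
  have hmono : ∀ k : ℕ, 1 ≤ k → f (k + 1) ≤ f k := by
    intro k hk
    have h := (key k hk).1.trans (key k hk).2
    have : ((f (k+1) - f k : ℝ) : EReal) ≤ ((0 : ℝ) : EReal) := by simpa using h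
    rw [EReal.coe_le_coe_iff] at this
    linarith
  have hmono' : ∀ m k : ℕ, 1 ≤ m → m ≤ k → f k ≤ f m := by
    intro m k hm hmk
    induction k with
    | zero => omega
    | succ j ih =>
      rcases Nat.eq_or_lt_of_le hmk with h | h
      · rw [h]
      · exact (hmono j (by omega)).trans (ih (by omega))
  intro K hK
  -- ĥ ≤ f (K+1)
  have hhat_le : hhat ≤ f (K + 1) := by
    refine le_of_tendsto hlim ?_
    filter_upwards [Filter.eventually_ge_atTop (K + 1)] with m hm
    exact hmono' (K + 1) m (by omega) hm
  -- choose minimizer of d on Icc 1 K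
  obtain ⟨k₀, hk₀mem, hk₀min⟩ :=
    (Finset.Icc 1 K).exists_min_image d (Finset.nonempty_Icc.mpr hK)
  have hk₀1 : 1 ≤ k₀ := (Finset.mem_Icc.mp hk₀mem).1
  -- K * d k₀ ≤ ∑ d = f 1 - f (K+1)
  have hsum : ∑ k ∈ Finset.Icc 1 K, d k = f 1 - f (K + 1) := by
    rw [show Finset.Icc 1 K = Finset.Ico 1 (K + 1) by rfl]
    rw [Finset.sum_Ico_eq_sum_range]
    have := Finset.sum_range_sub' (fun i => f (i + 1)) K
    simp only [hd, Finset.sum_sub_distrib] at this ⊢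
    simpa [Nat.add_comm, Nat.add_assoc, Nat.add_left_comm] using this
  have hKd : (K : ℝ) * d k₀ ≤ f 1 - hhat := by
    have h1 : (Finset.Icc 1 K).card • d k₀ ≤ ∑ k ∈ Finset.Icc 1 K, d k :=
      Finset.card_nsmul_le_sum _ _ _ fun k hk => hk₀min k hk
    rw [Nat.card_Icc] at h1
    simp only [nsmul_eq_mul, Nat.add_sub_cancel] at h1
    rw [hsum] at h1
    linarith
  have hKpos : (0:ℝ) < (K : ℝ) := by exact_mod_cast hK
  have hdk₀ : d k₀ ≤ (f 1 - hhat) / (K : ℝ) := by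
    rw [le_div_iff₀ hKpos]; linarith [hKd]
  -- conclude
  refine le_trans (Finset.inf'_le _ hk₀mem) ?_
  have h1 : -(Delta X y δ ρ' (B k₀)) ≤ ((d k₀ : ℝ) : EReal) := by
    have := (key k₀ hk₀1).1
    have h2 : -((f (k₀+1) - f k₀ : ℝ) : EReal) = ((d k₀ : ℝ) : EReal) := by
      rw [← EReal.coe_neg]
      congr 1
      simp [hd]
    calc -(Delta X y δ ρ' (B k₀)) ≤ -((f (k₀+1) - f k₀ : ℝ) : EReal) :=
          EReal.neg_le_neg_iff.mpr this
      _ = _ := h2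
  refine h1.trans ?_
  rw [EReal.coe_le_coe_iff]
  exact hdk₀
end
end

section
/- (Example 1: ℓ₁ minimization selects the dense representation.) Let n ≥ 2, p = n + 1, and τ > 0. Let X ∈ ℝ^{n×p} have first column x₁ = (1, τ, …, τ)ᵀ and, for j = 2,…,p, j-th column x_j = e_{j−1}, the (j−1)-st standard basis vector of ℝⁿ. Let y = x₁ − x₂, and let β_dense ∈ ℝ^p be the coefficient vector with β_j = τ for j = 3,…,p and β₁ = β₂ = 0 (so X β_dense = y). If τ(n−1) < 2, then β_dense is the unique minimizer of ‖β‖₁ over { β ∈ ℝ^p : Xβ = y }; in particular the sparse coefficient vector e₁ − e₂ ∈ ℝ^p, which also satisfies X(e₁ − e₂) = y and has ‖e₁ − e₂‖₁ = 2 > τ(n−1), is not an ℓ₁ minimizer. -/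
noncomputable section
open Classical

/-- ℓ₁-norm. -/
def l1 {p : ℕ} (β : Fin p → ℝ) : ℝ := ∑ i, |β i|

/-- Example 1: with `x₁ = (1,τ,…,τ)ᵀ`, `x_j = e_{j−1}` for `j ≥ 2`,
`y = x₁ − x₂` and `τ(n−1) < 2`, the dense representation `β_dense` (with `β_j = τ` for
`j ≥ 3` and `β₁ = β₂ = 0`) is the unique ℓ₁-minimizer over `{β : Xβ = y}`; in particular
the sparse vector `e₁ − e₂`, which also represents `y` and has ℓ₁-norm `2`, is not an
ℓ₁-minimizer.  (Indices are `0`-based in this formalization.) -/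
theorem stmt18 (n : ℕ) (hn : 2 ≤ n) (τ : ℝ) (hτ : 0 < τ)
    (X : Matrix (Fin n) (Fin (n + 1)) ℝ)
    (hX : ∀ i j, X i j =
      if (j : ℕ) = 0 then (if (i : ℕ) = 0 then 1 else τ)
      else (if (i : ℕ) = (j : ℕ) - 1 then 1 else 0))
    (y : Fin n → ℝ) (hy : ∀ i, y i = X i 0 - X i 1)
    (βdense : Fin (n + 1) → ℝ)
    (hβdense : ∀ j, βdense j = if 2 ≤ (j : ℕ) then τ else 0)
    (βsparse : Fin (n + 1) → ℝ)
    (hβsparse : ∀ j, βsparse j =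
      if (j : ℕ) = 0 then 1 else if (j : ℕ) = 1 then -1 else 0)
    (hτn : τ * ((n : ℝ) - 1) < 2) :
    X.mulVec βdense = y ∧
    (∀ β : Fin (n + 1) → ℝ, X.mulVec β = y → β ≠ βdense → l1 βdense < l1 β) ∧
    X.mulVec βsparse = y ∧
    l1 βsparse = 2 ∧
    ¬ (∀ β : Fin (n + 1) → ℝ, X.mulVec β = y → l1 βsparse ≤ l1 β) := by
  obtain ⟨m, rfl⟩ : ∃ m, n = m + 2 := ⟨n - 2, by omega⟩
  -- key formula for mulVec
  have hmul : ∀ (β : Fin (m + 2 + 1) → ℝ) (i : Fin (m + 2)),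
      X.mulVec β i = (if (i : ℕ) = 0 then 1 else τ) * β 0 + β i.succ := by
    intro β i
    simp only [Matrix.mulVec, dotProduct]
    rw [Fin.sum_univ_succ]
    congr 1
    · rw [hX]; simp
    · rw [Finset.sum_eq_single i]
      · rw [hX]; simp
      · intro b _ hb
        rw [hX]
        have hb' : (i : ℕ) ≠ (b : ℕ) := fun h => hb (Fin.ext h.symm)
        simp only [Fin.val_succ]
        rw [if_neg (by omega), if_neg (by omega)]
        ring
      · intro h; exact absurd (Finset.mem_univ i) h
  have hy' : ∀ i : Fin (m + 2), y i = if (i : ℕ) = 0 then 0 else τ := by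
    intro i
    rw [hy, hX, hX]
    by_cases hi : (i : ℕ) = 0 <;> simp [hi]
  -- constraints
  have hconstr : ∀ β : Fin (m + 2 + 1) → ℝ, X.mulVec β = y →
      β 1 = -(β 0) ∧ ∀ j : Fin (m + 2 + 1), 2 ≤ (j : ℕ) → β j = τ * (1 - β 0) := by
    intro β hβ
    constructor
    · have h0 := congrFun hβ (0 : Fin (m + 2))
      rw [hmul, hy'] at h0
      have e : (0 : Fin (m + 2)).succ = (1 : Fin (m + 2 + 1)) := rfl
      rw [e] at h0
      simp at h0
      linarith
    · intro j hj
      have hjlt : (j : ℕ) - 1 < m + 2 := by omega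
      set i : Fin (m + 2) := ⟨(j : ℕ) - 1, hjlt⟩ with hi
      have hij : i.succ = j := by
        apply Fin.ext
        simp [hi, Fin.val_succ]
        omega
      have h1 := congrFun hβ i
      rw [hmul, hy', hij] at h1
      have hi0 : (i : ℕ) ≠ 0 := by simp [hi]; omega
      rw [if_neg hi0, if_neg hi0] at h1
      linarith
  -- l1 formula
  have hl1 : ∀ β : Fin (m + 2 + 1) → ℝ, X.mulVec β = y →
      l1 β = 2 * |β 0| + (m + 1 : ℝ) * |τ * (1 - β 0)| := by
    intro β hβ
    obtain ⟨h1, h2⟩ := hconstr β hβ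
    unfold l1
    rw [Fin.sum_univ_succ, Fin.sum_univ_succ]
    have e1 : (0 : Fin (m + 2)).succ = (1 : Fin (m + 2 + 1)) := rfl
    rw [e1, h1, abs_neg]
    have e2 : ∀ i : Fin (m + 1), |β i.succ.succ| = |τ * (1 - β 0)| := by
      intro i
      rw [h2 i.succ.succ (by simp [Fin.val_succ])]
    rw [Finset.sum_congr rfl (fun i _ => e2 i)]
    rw [Finset.sum_const, Finset.card_univ, Fintype.card_fin, nsmul_eq_mul]
    push_cast
    ring
  -- dense satisfies constraint
  have hdense : X.mulVec βdense = y := by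
    funext i
    rw [hmul, hy', hβdense, hβdense]
    simp only [Fin.val_zero, Fin.val_succ]
    by_cases hi : (i : ℕ) = 0
    · simp only [hi]; norm_num
    · simp only [if_neg hi]
      simp only [show ¬ (2:ℕ) ≤ 0 by norm_num, show 2 ≤ (i:ℕ) + 1 by omega, ↓reduceIte]
      ring
  have hsparse : X.mulVec βsparse = y := by
    funext i
    rw [hmul, hy', hβsparse, hβsparse]
    simp only [Fin.val_zero, Fin.val_succ]
    by_cases hi : (i : ℕ) = 0
    · simp only [hi]; norm_num
    · simp only [if_neg hi]
      rw [if_neg (show ¬ (i:ℕ) + 1 = 0 by omega), if_neg (show ¬ (i:ℕ) + 1 = 1 by omega)]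
      norm_num
  have hτn' : τ * ((m : ℝ) + 1) < 2 := by push_cast at hτn ⊢; linarith
  have hdense0 : βdense 0 = 0 := by rw [hβdense]; norm_num
  have hl1dense : l1 βdense = (m + 1 : ℝ) * τ := by
    rw [hl1 βdense hdense, hdense0]
    rw [abs_of_nonneg (by norm_num : (0:ℝ) ≤ 0)]
    rw [abs_of_pos (by linarith : (0:ℝ) < τ * (1 - 0))]
    ring
  refine ⟨hdense, ?_, hsparse, ?_, ?_⟩
  · intro β hβ hne
    obtain ⟨h1, h2⟩ := hconstr β hβ
    have ht : β 0 ≠ 0 := by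
      intro ht0
      apply hne
      funext j
      rcases Nat.lt_or_ge (j : ℕ) 2 with hj | hj
      · interval_cases h : (j : ℕ)
        · have : j = (0 : Fin (m + 2 + 1)) := Fin.ext (by simp [h])
          rw [this, ht0, hβdense]; norm_num
        · have : j = (1 : Fin (m + 2 + 1)) := Fin.ext (by simp [h])
          rw [this, h1, ht0, hβdense]; norm_num
      · rw [h2 j hj, ht0, hβdense, if_pos hj]; ring
    rw [hl1 β hβ, hl1dense]
    have habs : |τ * (1 - β 0)| = τ * |1 - β 0| := by
      rw [abs_mul, abs_of_pos hτ]
    have h3 : (1 : ℝ) - |β 0| ≤ |1 - β 0| := by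
      have := abs_sub_abs_le_abs_sub (1 : ℝ) (β 0)
      simp at this
      linarith
    have h4 : 0 < |β 0| := abs_pos.mpr ht
    rw [habs]
    have key : τ * (1 - |β 0|) ≤ τ * |1 - β 0| := mul_le_mul_of_nonneg_left h3 hτ.le
    nlinarith [mul_le_mul_of_nonneg_left key (by positivity : (0:ℝ) ≤ (m:ℝ) + 1),
      mul_pos h4 (by linarith : (0:ℝ) < 2 - τ * ((m:ℝ) + 1))]
  · rw [hl1 βsparse hsparse, hβsparse]
    norm_num
  · intro h
    have := h βdense hdense
    rw [hl1dense, hl1 βsparse hsparse, hβsparse] at this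
    norm_num at this
    linarith
end
end
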